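/- arXiv:2001.00609 — 5 statements merged into one kernel-verified Lean document; each statement's English description precedes it below -/
import Mathlib

section
/- If B ≤ A are hypergraphs (B self-sufficient in A), then the pregeometry G_B associated to B is strongly embedded in the pregeometry G_A associated to A: G_B ⊑ G_A. -/
open scoped Classical

/-- A combinatorial pregeometry (matroid) on the ground type `α`, given by a
dimension (rank) function on finite subsets. -/
structure Pregeometry (α : Type*) [DecidableEq α] where
  dim : Finset α → ℕ
  dim_empty : dim ∅ = 0
  dim_le_insert : ∀ (A : Finset α) (x : α), dim A ≤ dim (insert x A)
  insert_le_dim : ∀ (A : Finset α) (x : α), dim (insert x A) ≤ dim A + 1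
  submodular : ∀ A B : Finset α, dim (A ∪ B) + dim (A ∩ B) ≤ dim A + dim B

namespace Pregeometry

variable {α : Type*} [DecidableEq α] (G : Pregeometry α)

/-- Closure of an arbitrary subset. -/
def cl (Y : Set α) : Set α :=
  {x | ∃ A : Finset α, ↑A ⊆ Y ∧ G.dim (insert x A) = G.dim A}

/-- `Y` is closed (in the ambient pregeometry `G`). -/
def IsClosed (Y : Set α) : Prop := G.cl Y = Y

/-- `X` is a closed set of the subpregeometry of `G` induced on `P`
(whose closure operator is `Y ↦ cl Y ∩ P`). -/
def IsClosedIn (P X : Set α) : Prop := X ⊆ P ∧ G.cl X ∩ P = X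

/-- Dimension of an arbitrary subset, with value `⊤` when infinite-dimensional. -/
noncomputable def edim (Y : Set α) : ℕ∞ :=
  ⨆ (A : Finset α) (_ : ↑A ⊆ Y), (G.dim A : ℕ∞)

/-- The (natural number) dimension of a finite-dimensional subset. -/
noncomputable def sdim (Y : Set α) : ℕ := (G.edim Y).toNat

/-- The alternating inclusion–exclusion sum
`Δ_G(Σ) = Σ_{∅ ≠ S ⊆ Σ} (-1)^{|S|+1} d(⋂ S)` of a finite collection of sets. -/
noncomputable def flatSum (Sig : Finset (Set α)) : ℤ :=
  ∑ S ∈ Sig.powerset.filter (· ≠ ∅),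
    (-1) ^ (S.card + 1) * (G.sdim (⋂₀ ↑S) : ℤ)

/-- `P ⊑* Q`: for the subpregeometries induced on `P ⊆ Q`, the dimension of the
intersection of two closed sets of `P` equals the dimension of the intersection
of their closures in `Q` (the closure of `X` in `Q` being `cl X ∩ Q`). -/
def SqStar (P Q : Set α) : Prop := P ⊆ Q ∧
  ∀ X₁ X₂ : Set α, G.IsClosedIn P X₁ → G.IsClosedIn P X₂ →
    G.edim (X₁ ∩ X₂) = G.edim (G.cl X₁ ∩ G.cl X₂ ∩ Q)

/-- `P ⊑ Q`: `P` is strongly embedded in `Q`: for every finite collection `Σ` of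
finite-dimensional closed sets of `Q`, `Δ_P(Σ_P) ≤ Δ_Q(Σ)` where
`Σ_P = {E ∩ P : E ∈ Σ}`. -/
def Sq (P Q : Set α) : Prop := P ⊆ Q ∧
  ∀ Sig : Finset (Set α), (∀ E ∈ Sig, G.IsClosedIn Q E) →
    (∀ E ∈ Sig, G.edim E ≠ ⊤) →
    G.flatSum (Sig.image (· ∩ P)) ≤ G.flatSum Sig

/-- The subpregeometry induced on `P` is flat: every finite collection of
finite-dimensional closed sets satisfies `d(⋃ Σ) ≤ Δ(Σ)`. -/
def FlatIn (P : Set α) : Prop :=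
  ∀ Sig : Finset (Set α), (∀ E ∈ Sig, G.IsClosedIn P E) →
    (∀ E ∈ Sig, G.edim E ≠ ⊤) →
    (G.sdim (⋃₀ ↑Sig) : ℤ) ≤ G.flatSum Sig

/-- The α-function of the subpregeometry of `G` induced on `P`:
`α(X) = |X| − d(X) − Σ_{Y ⊊ X closed} α(Y)`. -/
noncomputable def alphaIn (P : Set α) (X : Finset α) : ℤ :=
  (X.card : ℤ) - (G.dim X : ℤ) -
    ∑ Y ∈ (X.powerset.filter fun Y => Y ≠ X ∧ G.IsClosedIn P ↑Y).attach,
      alphaIn P Y.1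
termination_by X.card
decreasing_by
  have h := Y.2
  simp only [Finset.mem_filter, Finset.mem_powerset] at h
  exact Finset.card_lt_card (lt_of_le_of_ne h.1 h.2.1)

end Pregeometry

/-- A hypergraph on the vertex type `α`: a set of nonempty finite edges. -/
structure HGraph (α : Type*) where
  edges : Set (Finset α)
  nonempty_edges : ∀ e ∈ edges, e ≠ ∅

namespace HGraph

variable {α : Type*} [DecidableEq α] (A : HGraph α)

/-- The set of edges contained in a set of vertices. -/
def edgesIn (P : Set α) : Set (Finset α) := {e | e ∈ A.edges ∧ ↑e ⊆ P}

/-- The predimension `δ(P) = |P| − |R[P]|` of a finite set of vertices. -/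
noncomputable def delta (P : Finset α) : ℤ :=
  (P.card : ℤ) - (A.edgesIn ↑P).ncard

/-- The relative predimension `δ(L/P) = |L∖P| − |R[L∪P]∖R[P]|`. -/
noncomputable def deltaRel (L : Finset α) (P : Set α) : ℤ :=
  ((↑L \ P : Set α).ncard : ℤ) -
    ({e | e ∈ A.edges ∧ ↑e ⊆ ↑L ∪ P ∧ ¬ ↑e ⊆ P} : Set (Finset α)).ncard

/-- `P` is self-sufficient in `A`: `δ(X/P) ≥ 0` for every finite `X`, stated so
as to be meaningful even when infinitely many edges are involved. -/
def SelfSuff (P : Set α) : Prop :=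
  ∀ X : Finset α, ∀ Es : Finset (Finset α),
    (∀ e ∈ Es, e ∈ A.edges ∧ ↑e ⊆ ↑X ∪ P ∧ ¬ ↑e ⊆ P) →
    (Es.card : ℤ) ≤ ((↑X \ P : Set α).ncard : ℤ)

/-- The dimension function associated to a hypergraph:
`d(X) = inf {δ(B) : X ⊆ B finite}`. -/
noncomputable def hdim (X : Finset α) : ℤ :=
  sInf {d : ℤ | ∃ B : Finset α, X ⊆ B ∧ d = A.delta B}

/-- The induced subhypergraph on a set `P` of vertices (keeping `α` as the
ambient vertex type). -/
def restrict (P : Set α) : HGraph α :=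
  ⟨{e | e ∈ A.edges ∧ ↑e ⊆ P}, fun e he => A.nonempty_edges e he.1⟩

/-- A pregeometry `G` is represented by the hypergraph `A` if the associated
dimension function of `A` is the dimension function of `G`. -/
def Represents (G : Pregeometry α) : Prop :=
  ∀ X : Finset α, (G.dim X : ℤ) = A.hdim X

end HGraph
section AuxCombinatorics

open Finset

lemma aux_sign_sum {γ : Type*} [DecidableEq γ] (T : Finset γ) :
    ∑ S ∈ T.powerset.filter (· ≠ ∅), (-1 : ℤ) ^ (S.card + 1) = if T = ∅ then 0 else 1 := by
  have hfe : T.powerset.filter (· ≠ ∅) = T.powerset.erase ∅ := by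
    ext S; simp [Finset.mem_erase, and_comm]
  have h1 : ∑ S ∈ T.powerset, (-1 : ℤ) ^ (S.card + 1) = -(if T = ∅ then 1 else 0) := by
    have h0 := Finset.sum_powerset_neg_one_pow_card (x := T)
    calc ∑ S ∈ T.powerset, (-1 : ℤ) ^ (S.card + 1)
        = ∑ S ∈ T.powerset, (-1) * (-1 : ℤ) ^ S.card := by
          apply Finset.sum_congr rfl; intro S _; ring
      _ = -(if T = ∅ then 1 else 0) := by rw [← Finset.mul_sum, h0]; ring
  have h2 := Finset.sum_erase_add T.powerset (fun S => (-1 : ℤ) ^ (S.card + 1))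
    (Finset.empty_mem_powerset T)
  rw [hfe]
  have h3 : ((-1 : ℤ) ^ ((∅ : Finset γ).card + 1)) = -1 := by simp
  split_ifs with h <;> rw [h1] at h2 <;> simp [h] at h2 ⊢ <;> linarith

/-- Count of elements of `U` satisfying `q` (with a fixed classical instance). -/
noncomputable def auxCnt {β : Type*} (U : Finset β) (q : β → Prop) : ℕ :=
  (U.filter (fun u => q u)).card

lemma auxCnt_eq {β : Type*} (U : Finset β) (q : β → Prop) [DecidablePred q] :
    auxCnt U q = (U.filter q).card := by
  unfold auxCnt
  congr 1
  ext x
  simp only [Finset.mem_filter]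

lemma aux_card_congr {β : Type*} {s t : Finset β} (h : ∀ x, x ∈ s ↔ x ∈ t) :
    s.card = t.card := congrArg Finset.card (Finset.ext h)

lemma aux_cnt_card {β : Type*} (U : Finset β) (q : β → Prop) (s : Finset β)
    (h : ∀ x, x ∈ s ↔ x ∈ U ∧ q x) : s.card = auxCnt U q := by
  unfold auxCnt
  apply aux_card_congr
  intro x
  rw [Finset.mem_filter]
  exact h x

lemma aux_cnt_sum {β : Type*} (U : Finset β) (q : β → Prop) :
    (auxCnt U q : ℤ) = ∑ u ∈ U, (if q u then (1 : ℤ) else 0) := by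
  unfold auxCnt
  rw [Finset.card_filter]
  push_cast
  apply Finset.sum_congr rfl
  intro u _
  split_ifs <;> simp

lemma aux_cnt_congr {β : Type*} (U : Finset β) (q q' : β → Prop)
    (h : ∀ u ∈ U, q u ↔ q' u) : (auxCnt U q : ℤ) = (auxCnt U q' : ℤ) := by
  rw [aux_cnt_sum, aux_cnt_sum]
  exact Finset.sum_congr rfl (fun u hu => if_congr (h u hu) rfl rfl)

lemma aux_cnt_split {β : Type*} (U : Finset β) (q r : β → Prop) :
    (auxCnt U q : ℤ)
      = (auxCnt U (fun u => q u ∧ r u) : ℤ) + (auxCnt U (fun u => q u ∧ ¬ r u) : ℤ) := by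
  rw [aux_cnt_sum, aux_cnt_sum, aux_cnt_sum, ← Finset.sum_add_distrib]
  apply Finset.sum_congr rfl
  intro u _
  by_cases h1 : q u <;> by_cases h2 : r u <;> simp [h1, h2]

lemma aux_master {β γ : Type*} [DecidableEq β] [DecidableEq γ] (U : Finset β) (Sig : Finset γ)
    (p : β → γ → Prop) (Q : Finset γ → β → Prop) (R : β → Prop)
    (hQ : ∀ S u, Q S u ↔ ∀ E ∈ S, p u E) (hR : ∀ u, R u ↔ ∃ E ∈ Sig, p u E) :
    ∑ S ∈ Sig.powerset.filter (· ≠ ∅), (-1 : ℤ) ^ (S.card + 1) * (auxCnt U (Q S) : ℤ)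
      = (auxCnt U R : ℤ) := by
  classical
  have hrw : ∀ (q : β → Prop), (auxCnt U q : ℤ) = ∑ u ∈ U, (if q u then (1 : ℤ) else 0) := by
    intro q
    unfold auxCnt
    rw [Finset.card_filter]
    push_cast
    apply Finset.sum_congr rfl
    intro u _
    split_ifs <;> simp
  calc ∑ S ∈ Sig.powerset.filter (· ≠ ∅), (-1 : ℤ) ^ (S.card + 1) * (auxCnt U (Q S) : ℤ)
      = ∑ S ∈ Sig.powerset.filter (· ≠ ∅), ∑ u ∈ U,
          (-1 : ℤ) ^ (S.card + 1) * (if Q S u then (1 : ℤ) else 0) := by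
        apply Finset.sum_congr rfl
        intro S _
        rw [hrw _, Finset.mul_sum]
    _ = ∑ u ∈ U, ∑ S ∈ Sig.powerset.filter (· ≠ ∅),
          (-1 : ℤ) ^ (S.card + 1) * (if Q S u then (1 : ℤ) else 0) := Finset.sum_comm
    _ = ∑ u ∈ U, (if R u then (1 : ℤ) else 0) := by
        apply Finset.sum_congr rfl
        intro u _
        set T := Sig.filter (fun E => p u E) with hT
        have hTS : T ⊆ Sig := Finset.filter_subset _ _
        have step1 : ∀ S ∈ Sig.powerset.filter (· ≠ ∅),
            (-1 : ℤ) ^ (S.card + 1) * (if Q S u then (1 : ℤ) else 0)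
            = (if S ⊆ T then ((-1 : ℤ) ^ (S.card + 1)) else 0) := by
          intro S hS
          simp only [Finset.mem_filter, Finset.mem_powerset] at hS
          have hiff : Q S u ↔ S ⊆ T := by
            rw [hQ]
            constructor
            · intro h x hx
              rw [hT]
              exact Finset.mem_filter.mpr ⟨hS.1 hx, h x hx⟩
            · intro h x hx
              exact (Finset.mem_filter.mp (h hx)).2
          rw [if_congr hiff rfl rfl]
          split_ifs <;> ring
        rw [Finset.sum_congr rfl step1, ← Finset.sum_filter]
        have hset : (Sig.powerset.filter (· ≠ ∅)).filter (· ⊆ T)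
            = T.powerset.filter (· ≠ ∅) := by
          ext S
          simp only [Finset.mem_filter, Finset.mem_powerset]
          constructor
          · rintro ⟨⟨h1, h2⟩, h3⟩
            exact ⟨h3, h2⟩
          · rintro ⟨h1, h2⟩
            exact ⟨⟨h1.trans hTS, h2⟩, h1⟩
        rw [hset, aux_sign_sum]
        have hTe : T = ∅ ↔ ¬ R u := by
          rw [hT, Finset.filter_eq_empty_iff, hR]
          push_neg
          rfl
        split_ifs with h1 h2 h2
        · rw [hTe] at h1
          exact absurd h2 h1
        · rfl
        · rfl
        · rw [hTe] at h1
          push_neg at h1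
          exact absurd h2 (by simpa using h1)
    _ = (auxCnt U R : ℤ) := (hrw _).symm

lemma aux_removal {γ : Type*} [DecidableEq γ] (h : Finset γ → ℤ) (J : Finset γ) (E E' : γ)
    (hEJ : E ∈ J) (hE'J : E' ∈ J) (hne : E' ≠ E)
    (hinv : ∀ S, S ⊆ J → E ∈ S → E' ∉ S → h (insert E' S) = h S) :
    ∑ S ∈ J.powerset.filter (· ≠ ∅), (-1 : ℤ) ^ (S.card + 1) * h S
      = ∑ S ∈ (J.erase E).powerset.filter (· ≠ ∅), (-1 : ℤ) ^ (S.card + 1) * h S := by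
  classical
  have hsplit := Finset.sum_filter_add_sum_filter_not (J.powerset.filter (· ≠ ∅))
    (fun S => E ∈ S) (fun S => (-1 : ℤ) ^ (S.card + 1) * h S)
  set M := (J.powerset.filter (· ≠ ∅)).filter (fun S => E ∈ S) with hM
  set ff : Finset γ → ℤ := fun S => (-1 : ℤ) ^ (S.card + 1) * h S with hff
  set gg : Finset γ → Finset γ := fun S => if E' ∈ S then S.erase E' else insert E' S with hgg
  have hMspec : ∀ S, S ∈ M ↔ (S ⊆ J ∧ S ≠ ∅ ∧ E ∈ S) := by
    intro S
    simp only [hM, Finset.mem_filter, Finset.mem_powerset]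
    tauto
  have hmem : ∀ S, S ∈ M → gg S ∈ M := by
    intro S hS
    rw [hMspec] at hS ⊢
    obtain ⟨hSJ, hSne, hES⟩ := hS
    by_cases hE'S : E' ∈ S
    · simp only [hgg, hE'S, if_true]
      have hEe : E ∈ S.erase E' := Finset.mem_erase.mpr ⟨hne.symm, hES⟩
      exact ⟨(Finset.erase_subset _ _).trans hSJ, Finset.ne_empty_of_mem hEe, hEe⟩
    · simp only [hgg, hE'S, if_false]
      exact ⟨Finset.insert_subset hE'J hSJ, Finset.insert_ne_empty _ _,
        Finset.mem_insert_of_mem hES⟩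
  have h1 : ∀ S, S ∈ M → ff S + ff (gg S) = 0 := by
    intro S hS
    rw [hMspec] at hS
    obtain ⟨hSJ, hSne, hES⟩ := hS
    by_cases hE'S : E' ∈ S
    · simp only [hgg, hff, hE'S, if_true]
      have hcard : (S.erase E').card + 1 = S.card := Finset.card_erase_add_one hE'S
      have hEe : E ∈ S.erase E' := Finset.mem_erase.mpr ⟨hne.symm, hES⟩
      have hh : h (S.erase E') = h S := by
        have h0 := hinv (S.erase E') ((Finset.erase_subset _ _).trans hSJ) hEe
          (Finset.notMem_erase _ _)
        rw [Finset.insert_erase hE'S] at h0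
        exact h0.symm
      rw [hh, ← hcard]
      ring
    · simp only [hgg, hff, hE'S, if_false]
      have hcard : (insert E' S).card = S.card + 1 := Finset.card_insert_of_notMem hE'S
      rw [hinv S hSJ hES hE'S, hcard]
      ring
  have h3 : ∀ S, S ∈ M → ff S ≠ 0 → gg S ≠ S := by
    intro S _ _
    by_cases hE'S : E' ∈ S
    · simp only [hgg, hE'S, if_true]
      intro hc
      apply Finset.notMem_erase E' S
      rw [hc]
      exact hE'S
    · simp only [hgg, hE'S, if_false]
      intro hc
      apply hE'S
      rw [← hc]
      exact Finset.mem_insert_self E' S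
  have h4 : ∀ S, S ∈ M → gg (gg S) = S := by
    intro S _
    by_cases hE'S : E' ∈ S
    · simp only [hgg, hE'S, if_true, Finset.notMem_erase, if_false]
      exact Finset.insert_erase hE'S
    · simp only [hgg, hE'S, if_false, Finset.mem_insert_self, if_true]
      exact Finset.erase_insert hE'S
  have hzero : ∑ S ∈ M, ff S = 0 :=
    Finset.sum_involution (fun S _ => gg S) (fun S hS => h1 S hS) (fun S hS => h3 S hS)
      (fun S hS => hmem S hS) (fun S hS => h4 S hS)
  have hset : (J.powerset.filter (· ≠ ∅)).filter (fun S => ¬ E ∈ S)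
      = (J.erase E).powerset.filter (· ≠ ∅) := by
    ext S
    simp only [Finset.mem_filter, Finset.mem_powerset, Finset.subset_erase]
    tauto
  calc ∑ S ∈ J.powerset.filter (· ≠ ∅), ff S
      = ∑ S ∈ M, ff S
        + ∑ S ∈ (J.powerset.filter (· ≠ ∅)).filter (fun S => ¬ E ∈ S), ff S := hsplit.symm
    _ = ∑ S ∈ (J.erase E).powerset.filter (· ≠ ∅), ff S := by rw [hzero, hset, zero_add]

end AuxCombinatorics

section AuxHGraph

open Finset

variable {α : Type*} [DecidableEq α]

/-- The edges of `A` contained in a finset `B`, as a finset. -/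
noncomputable def auxEIn (A : HGraph α) (B : Finset α) : Finset (Finset α) :=
  B.powerset.filter (· ∈ A.edges)

lemma aux_mem_eIn {A : HGraph α} {B : Finset α} {e : Finset α} :
    e ∈ auxEIn A B ↔ e ⊆ B ∧ e ∈ A.edges := by
  simp [auxEIn]

lemma aux_edgesIn_coe (A : HGraph α) (B : Finset α) :
    A.edgesIn ↑B = ↑(auxEIn A B) := by
  ext e
  simp only [HGraph.edgesIn, Set.mem_setOf_eq, Finset.coe_mem, Finset.mem_coe,
    aux_mem_eIn, Finset.coe_subset]
  tauto

lemma aux_delta_eq (A : HGraph α) (B : Finset α) :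
    A.delta B = (B.card : ℤ) - ((auxEIn A B).card : ℤ) := by
  unfold HGraph.delta
  rw [aux_edgesIn_coe, Set.ncard_coe_finset]

lemma aux_delta_nonneg {A : HGraph α} (hA : A.SelfSuff ∅) (B : Finset α) :
    0 ≤ A.delta B := by
  have h := hA B (auxEIn A B) ?_
  · have h2 : ((↑B \ (∅ : Set α)) : Set α).ncard = B.card := by
      rw [Set.diff_empty, Set.ncard_coe_finset]
    rw [aux_delta_eq]
    rw [h2] at h
    linarith
  · intro e he
    rw [aux_mem_eIn] at he
    refine ⟨he.2, ?_, ?_⟩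
    · rw [Set.union_empty]
      exact_mod_cast he.1
    · intro hc
      rw [Set.subset_empty_iff] at hc
      exact A.nonempty_edges e he.2 (by exact_mod_cast hc)

lemma aux_hdim_le_delta {A : HGraph α} (h0 : ∀ C : Finset α, 0 ≤ A.delta C)
    {X B : Finset α} (h : X ⊆ B) : A.hdim X ≤ A.delta B :=
  csInf_le ⟨0, by rintro d ⟨C, _, rfl⟩; exact h0 C⟩ ⟨B, h, rfl⟩

lemma aux_hdim_mono {A : HGraph α} (h0 : ∀ C : Finset α, 0 ≤ A.delta C)
    {X Y : Finset α} (h : X ⊆ Y) : A.hdim X ≤ A.hdim Y := by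
  unfold HGraph.hdim
  refine le_csInf ⟨A.delta Y, ⟨Y, subset_rfl, rfl⟩⟩ ?_
  rintro d ⟨B, hB, rfl⟩
  exact aux_hdim_le_delta h0 (h.trans hB)

lemma aux_exists_min {A : HGraph α} (h0 : ∀ C : Finset α, 0 ≤ A.delta C)
    (X : Finset α) :
    ∃ B : Finset α, X ⊆ B ∧ A.delta B = A.hdim X ∧ ∀ C, B ⊆ C → A.delta B ≤ A.delta C := by
  have hne : {d : ℤ | ∃ B : Finset α, X ⊆ B ∧ d = A.delta B}.Nonempty :=
    ⟨A.delta X, X, subset_rfl, rfl⟩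
  have hbdd : BddBelow {d : ℤ | ∃ B : Finset α, X ⊆ B ∧ d = A.delta B} :=
    ⟨0, by rintro d ⟨C, _, rfl⟩; exact h0 C⟩
  have hmem := Int.csInf_mem hne hbdd
  obtain ⟨B, hXB, hB⟩ := hmem
  refine ⟨B, hXB, hB.symm, ?_⟩
  intro C hC
  rw [← hB]
  exact aux_hdim_le_delta h0 (hXB.trans hC)

lemma aux_delta_submod (A : HGraph α) (B C : Finset α) :
    A.delta (B ∪ C) + A.delta (B ∩ C) ≤ A.delta B + A.delta C := by
  rw [aux_delta_eq, aux_delta_eq, aux_delta_eq, aux_delta_eq]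
  have hcard : (B ∪ C).card + (B ∩ C).card = B.card + C.card :=
    Finset.card_union_add_card_inter B C
  have h1 : auxEIn A B ∪ auxEIn A C ⊆ auxEIn A (B ∪ C) := by
    intro e he
    rw [Finset.mem_union, aux_mem_eIn, aux_mem_eIn] at he
    rw [aux_mem_eIn]
    rcases he with ⟨h1, h2⟩ | ⟨h1, h2⟩
    · exact ⟨h1.trans Finset.subset_union_left, h2⟩
    · exact ⟨h1.trans Finset.subset_union_right, h2⟩
  have h2 : auxEIn A (B ∩ C) = auxEIn A B ∩ auxEIn A C := by
    ext e
    simp only [aux_mem_eIn, Finset.mem_inter, Finset.subset_inter_iff]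
    tauto
  have h3 := Finset.card_union_add_card_inter (auxEIn A B) (auxEIn A C)
  have h4 : (auxEIn A B ∪ auxEIn A C).card ≤ (auxEIn A (B ∪ C)).card :=
    Finset.card_le_card h1
  rw [h2]
  push_cast
  omega

lemma aux_delta_filterP {A : HGraph α} {P : Set α} (hP : A.SelfSuff P) (B : Finset α) :
    A.delta (B.filter (· ∈ P)) ≤ A.delta B := by
  classical
  set Bp := B.filter (· ∈ P) with hBp
  have hEp : auxEIn A Bp = (auxEIn A B).filter (fun e => ∀ x ∈ e, x ∈ P) := by
    ext e
    simp only [aux_mem_eIn, Finset.mem_filter, hBp]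
    constructor
    · rintro ⟨h1, h2⟩
      exact ⟨⟨h1.trans (Finset.filter_subset _ _), h2⟩,
        fun x hx => (Finset.mem_filter.mp (h1 hx)).2⟩
    · rintro ⟨⟨h1, h2⟩, h3⟩
      exact ⟨fun x hx => Finset.mem_filter.mpr ⟨h1 hx, h3 x hx⟩, h2⟩
  have hcard1 : Bp.card + (B.filter (fun x => ¬ x ∈ P)).card = B.card :=
    Finset.card_filter_add_card_filter_not (fun x => x ∈ P)
  have hcard2 : ((auxEIn A B).filter (fun e => ∀ x ∈ e, x ∈ P)).card
      + ((auxEIn A B).filter (fun e => ¬ ∀ x ∈ e, x ∈ P)).card = (auxEIn A B).card :=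
    Finset.card_filter_add_card_filter_not (fun e => ∀ x ∈ e, x ∈ P)
  have hss := hP B ((auxEIn A B).filter (fun e => ¬ ∀ x ∈ e, x ∈ P)) ?_
  · have hco : ((↑B : Set α) \ P) = ↑(B.filter (fun x => ¬ x ∈ P)) := by
      ext x
      simp
    rw [hco, Set.ncard_coe_finset] at hss
    rw [aux_delta_eq, aux_delta_eq, hEp]
    push_cast at hss ⊢
    omega
  · intro e he
    rw [Finset.mem_filter, aux_mem_eIn] at he
    refine ⟨he.1.2, ?_, ?_⟩
    · intro x hx
      exact Or.inl (he.1.1 (Finset.mem_coe.mp hx))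
    · intro hc
      exact he.2 (fun x hx => hc (Finset.mem_coe.mpr hx))

/-- `D` is a self-sufficient ("strong") finite set. -/
def AuxStrong (A : HGraph α) (D : Finset α) : Prop :=
  ∀ C, D ⊆ C → A.delta D ≤ A.delta C

lemma aux_strong_filterP {A : HGraph α} {P : Set α} (hP : A.SelfSuff P) {D : Finset α}
    (hD : AuxStrong A D) : AuxStrong A (D.filter (· ∈ P)) := by
  intro C hC
  set Dp := D.filter (· ∈ P) with hDp
  have h1 : A.delta (C ∩ D) ≤ A.delta C := by
    have hsub := aux_delta_submod A C D
    have h2 : A.delta D ≤ A.delta (C ∪ D) := hD _ Finset.subset_union_right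
    linarith
  have h3 : (C ∩ D).filter (· ∈ P) = Dp := by
    ext x
    simp only [Finset.mem_filter, Finset.mem_inter, hDp]
    constructor
    · rintro ⟨⟨_, hxD⟩, hxP⟩
      exact ⟨hxD, hxP⟩
    · rintro ⟨hxD, hxP⟩
      exact ⟨⟨hC (Finset.mem_filter.mpr ⟨hxD, hxP⟩), hxD⟩, hxP⟩
  calc A.delta Dp = A.delta ((C ∩ D).filter (· ∈ P)) := by rw [h3]
    _ ≤ A.delta (C ∩ D) := aux_delta_filterP hP _
    _ ≤ A.delta C := h1

end AuxHGraph

section AuxPregeometry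

open Finset

variable {α : Type*} [DecidableEq α]

lemma aux_subset_cl (G : Pregeometry α) (Y : Set α) : Y ⊆ G.cl Y := by
  intro x hx
  refine ⟨{x}, by simpa using hx, by simp⟩

lemma aux_cl_mono (G : Pregeometry α) {Y Z : Set α} (h : Y ⊆ Z) : G.cl Y ⊆ G.cl Z := by
  rintro x ⟨A₀, h1, h2⟩
  exact ⟨A₀, h1.trans h, h2⟩

lemma aux_isClosed_sInter {G : Pregeometry α} {S : Finset (Set α)} (hne : S.Nonempty)
    (h : ∀ E ∈ S, G.IsClosed E) : G.IsClosed (⋂₀ ↑S) := by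
  apply Set.Subset.antisymm
  · intro x hx
    rw [Set.mem_sInter]
    intro E hE
    have hE' : E ∈ S := hE
    have h1 : G.cl (⋂₀ ↑S) ⊆ G.cl E := aux_cl_mono G (Set.sInter_subset_of_mem hE)
    have h2 := h E hE'
    rw [Pregeometry.IsClosed] at h2
    rw [← h2]
    exact h1 hx
  · exact aux_subset_cl G _

lemma aux_dim_int {A : HGraph α} {Ga : Pregeometry α} (hga : A.Represents Ga)
    (X : Finset α) : (Ga.dim X : ℤ) = A.hdim X := hga X

lemma aux_dim_mono {A : HGraph α} {Ga : Pregeometry α} (hga : A.Represents Ga)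
    (h0 : ∀ C : Finset α, 0 ≤ A.delta C) {X Y : Finset α} (h : X ⊆ Y) :
    Ga.dim X ≤ Ga.dim Y := by
  have h1 := aux_hdim_mono h0 h
  rw [← aux_dim_int hga, ← aux_dim_int hga] at h1
  exact_mod_cast h1

lemma aux_strong_inter_closed {A : HGraph α} {Ga : Pregeometry α}
    (hga : A.Represents Ga) (h0 : ∀ C : Finset α, 0 ≤ A.delta C)
    {D : Finset α} {E : Set α} (hD : AuxStrong A D) (hE : Ga.IsClosed E) :
    A.delta (D.filter (· ∈ E)) = A.hdim (D.filter (· ∈ E)) := by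
  classical
  set F := D.filter (· ∈ E) with hF
  refine le_antisymm ?_ (aux_hdim_le_delta h0 subset_rfl)
  obtain ⟨B, hFB, hBd, _⟩ := aux_exists_min h0 F
  have hBE : ∀ b ∈ B, b ∈ E := by
    intro b hb
    have h1 : A.hdim (insert b F) ≤ A.delta B :=
      aux_hdim_le_delta h0 (Finset.insert_subset hb hFB)
    have h2 : A.hdim F ≤ A.hdim (insert b F) := aux_hdim_mono h0 (Finset.subset_insert _ _)
    have h3 : A.hdim (insert b F) = A.hdim F := le_antisymm (by rw [hBd] at h1; exact h1) h2
    have h4 : Ga.dim (insert b F) = Ga.dim F := by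
      have := aux_dim_int hga (insert b F)
      have h5 := aux_dim_int hga F
      have : (Ga.dim (insert b F) : ℤ) = (Ga.dim F : ℤ) := by rw [this, h5, h3]
      exact_mod_cast this
    have hbcl : b ∈ Ga.cl E :=
      ⟨F, fun x hx => (Finset.mem_filter.mp (Finset.mem_coe.mp hx)).2, h4⟩
    rw [Pregeometry.IsClosed] at hE
    rw [← hE]
    exact hbcl
  have hBD : B ∩ D = F := by
    ext x
    simp only [Finset.mem_inter, hF, Finset.mem_filter]
    constructor
    · rintro ⟨hxB, hxD⟩
      exact ⟨hxD, hBE x hxB⟩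
    · rintro ⟨hxD, hxE⟩
      exact ⟨hFB (Finset.mem_filter.mpr ⟨hxD, hxE⟩), hxD⟩
  have hsub := aux_delta_submod A B D
  have h4 : A.delta D ≤ A.delta (B ∪ D) := hD _ Finset.subset_union_right
  rw [hBD] at hsub
  rw [← hBd]
  linarith

lemma aux_dim_le_edim (G : Pregeometry α) {X : Finset α} {Y : Set α} (h : ↑X ⊆ Y) :
    (G.dim X : ℕ∞) ≤ G.edim Y :=
  le_iSup₂ (f := fun (A : Finset α) (_ : ↑A ⊆ Y) => ((G.dim A : ℕ∞))) X h

lemma aux_edim_mono (G : Pregeometry α) {Y Z : Set α} (h : Y ⊆ Z) : G.edim Y ≤ G.edim Z :=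
  iSup₂_le fun X hX => aux_dim_le_edim G (hX.trans h)

lemma aux_dim_le_sdim (G : Pregeometry α) {X : Finset α} {Y : Set α}
    (hY : G.edim Y ≠ ⊤) (h : ↑X ⊆ Y) : G.dim X ≤ G.sdim Y := by
  have h1 := aux_dim_le_edim G h
  rw [← ENat.coe_toNat hY] at h1
  exact_mod_cast h1

lemma aux_exists_basis (G : Pregeometry α) {Y : Set α} (hY : G.edim Y ≠ ⊤) :
    ∃ X : Finset α, ↑X ⊆ Y ∧ G.dim X = G.sdim Y := by
  by_contra hcon
  push_neg at hcon
  have h0 : G.sdim Y ≠ 0 := by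
    intro h0
    exact hcon ∅ (by simp) (by rw [G.dim_empty, h0])
  have hb : G.edim Y ≤ ((G.sdim Y - 1 : ℕ) : ℕ∞) := by
    apply iSup₂_le
    intro X hX
    have h1 : G.dim X ≤ G.sdim Y := aux_dim_le_sdim G hY hX
    have h2 : G.dim X ≠ G.sdim Y := fun hc => hcon X hX hc
    exact_mod_cast Nat.cast_le.mpr (by omega : G.dim X ≤ G.sdim Y - 1)
  rw [← ENat.coe_toNat hY] at hb
  have : G.sdim Y ≤ G.sdim Y - 1 := by exact_mod_cast hb
  omega

lemma aux_restrict_delta_le {A : HGraph α} {P : Set α} (B : Finset α) :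
    A.delta B ≤ (A.restrict P).delta B := by
  rw [aux_delta_eq, aux_delta_eq]
  have h : auxEIn (A.restrict P) B ⊆ auxEIn A B := by
    intro e he
    rw [aux_mem_eIn] at he ⊢
    exact ⟨he.1, he.2.1⟩
  have := Finset.card_le_card h
  omega

lemma aux_hdim_restrict {A : HGraph α} {P : Set α} (hA : A.SelfSuff ∅)
    (hP : A.SelfSuff P) {X : Finset α} (hX : ↑X ⊆ P) :
    (A.restrict P).hdim X = A.hdim X := by
  classical
  have h0 : ∀ C : Finset α, 0 ≤ A.delta C := aux_delta_nonneg hA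
  have h0' : ∀ C : Finset α, 0 ≤ (A.restrict P).delta C :=
    fun C => le_trans (h0 C) (aux_restrict_delta_le C)
  refine le_antisymm ?_ ?_
  · obtain ⟨B, hXB, hBd, _⟩ := aux_exists_min h0 X
    set Bp := B.filter (· ∈ P) with hBp
    have hXBp : X ⊆ Bp := fun x hx => Finset.mem_filter.mpr ⟨hXB hx, hX hx⟩
    have heq : (A.restrict P).delta Bp = A.delta Bp := by
      rw [aux_delta_eq, aux_delta_eq]
      have : auxEIn (A.restrict P) Bp = auxEIn A Bp := by
        ext e
        rw [aux_mem_eIn, aux_mem_eIn]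
        constructor
        · rintro ⟨h1, h2⟩
          exact ⟨h1, h2.1⟩
        · rintro ⟨h1, h2⟩
          refine ⟨h1, h2, ?_⟩
          intro x hx
          exact (Finset.mem_filter.mp (h1 (Finset.mem_coe.mp hx))).2
      rw [this]
    calc (A.restrict P).hdim X ≤ (A.restrict P).delta Bp := aux_hdim_le_delta h0' hXBp
      _ = A.delta Bp := heq
      _ ≤ A.delta B := aux_delta_filterP hP B
      _ = A.hdim X := hBd
  · unfold HGraph.hdim
    refine le_csInf ⟨(A.restrict P).delta X, ⟨X, subset_rfl, rfl⟩⟩ ?_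
    rintro d ⟨B, hB, rfl⟩
    exact (aux_hdim_le_delta h0 hB).trans (aux_restrict_delta_le B)

lemma aux_sdim_agree {A : HGraph α} {P : Set α} {Ga Gb : Pregeometry α}
    (hA : A.SelfSuff ∅) (hP : A.SelfSuff P) (hga : A.Represents Ga)
    (hgb : (A.restrict P).Represents Gb) {Y : Set α} (hY : Y ⊆ P) :
    Gb.sdim Y = Ga.sdim Y ∧ Gb.edim Y = Ga.edim Y := by
  have hdim : ∀ X : Finset α, ↑X ⊆ Y → Gb.dim X = Ga.dim X := by
    intro X hX
    have h1 := aux_dim_int hgb X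
    have h2 := aux_dim_int hga X
    have h3 := aux_hdim_restrict hA hP (hX.trans hY)
    have : (Gb.dim X : ℤ) = (Ga.dim X : ℤ) := by rw [h1, h2, h3]
    exact_mod_cast this
  have hedim : Gb.edim Y = Ga.edim Y := by
    apply le_antisymm
    · apply iSup₂_le
      intro X hX
      rw [hdim X hX]
      exact aux_dim_le_edim Ga hX
    · apply iSup₂_le
      intro X hX
      rw [← hdim X hX]
      exact aux_dim_le_edim Gb hX
  exact ⟨by rw [Pregeometry.sdim, Pregeometry.sdim, hedim], hedim⟩

end AuxPregeometry

set_option maxHeartbeats 2000000 in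
/-- if `B ≤ A` (the induced subhypergraph on `P` is
self-sufficient in `A`), then `G_B ⊑ G_A`: for every finite collection `Σ` of
finite-dimensional closed sets of `G_A`, `Δ_{G_B}(Σ_P) ≤ Δ_{G_A}(Σ)`. -/
theorem strong_embedding_of_selfSuff {α : Type*} [DecidableEq α]
    (A : HGraph α) (hA : A.SelfSuff ∅) (P : Set α) (hP : A.SelfSuff P)
    (Ga Gb : Pregeometry α) (hga : A.Represents Ga)
    (hgb : (A.restrict P).Represents Gb) :
    ∀ Sig : Finset (Set α), (∀ E ∈ Sig, Ga.IsClosed E) →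
      (∀ E ∈ Sig, Ga.edim E ≠ ⊤) →
      Gb.flatSum (Sig.image (· ∩ P)) ≤ Ga.flatSum Sig := by
  intro Sig hclosed hfin
  classical
  have h0 : ∀ C : Finset α, 0 ≤ A.delta C := aux_delta_nonneg hA
  set pp := Sig.powerset.filter (· ≠ ∅) with hpp
  -- basic facts about intersections
  have hSfacts : ∀ S : Finset (Set α), S ∈ pp →
      Ga.IsClosed (⋂₀ ↑S) ∧ Ga.edim (⋂₀ ↑S) ≠ ⊤ ∧ Ga.edim ((⋂₀ ↑S : Set α) ∩ P) ≠ ⊤ := by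
    intro S hS
    rw [hpp, Finset.mem_filter, Finset.mem_powerset] at hS
    obtain ⟨hSsub, hSne⟩ := hS
    have hSne' : S.Nonempty := Finset.nonempty_iff_ne_empty.mpr hSne
    obtain ⟨E₀, hE₀⟩ := hSne'
    have hsub : (⋂₀ ↑S : Set α) ⊆ E₀ := Set.sInter_subset_of_mem (Finset.mem_coe.mpr hE₀)
    refine ⟨aux_isClosed_sInter (Finset.nonempty_iff_ne_empty.mpr hSne)
      (fun E hE => hclosed E (hSsub hE)), ?_, ?_⟩
    · intro hc
      apply hfin E₀ (hSsub hE₀)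
      have h1 : Ga.edim (⋂₀ ↑S) ≤ Ga.edim E₀ := aux_edim_mono Ga hsub
      rw [hc] at h1
      exact top_le_iff.mp h1
    · intro hc
      apply hfin E₀ (hSsub hE₀)
      have h1 : Ga.edim ((⋂₀ ↑S : Set α) ∩ P) ≤ Ga.edim E₀ :=
        aux_edim_mono Ga ((Set.inter_subset_left).trans hsub)
      rw [hc] at h1
      exact top_le_iff.mp h1
  -- choice of bases
  have hbases : ∀ S : Finset (Set α), ∃ XX : Finset α × Finset α, S ∈ pp →
      (↑XX.1 ⊆ (⋂₀ ↑S : Set α) ∧ Ga.dim XX.1 = Ga.sdim (⋂₀ ↑S)) ∧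
      (↑XX.2 ⊆ ((⋂₀ ↑S : Set α) ∩ P) ∧ Ga.dim XX.2 = Ga.sdim ((⋂₀ ↑S : Set α) ∩ P)) := by
    intro S
    by_cases hS : S ∈ pp
    · obtain ⟨_, hfin1, hfin2⟩ := hSfacts S hS
      obtain ⟨X1, hX1, hX1d⟩ := aux_exists_basis Ga hfin1
      obtain ⟨X2, hX2, hX2d⟩ := aux_exists_basis Ga hfin2
      exact ⟨⟨X1, X2⟩, fun _ => ⟨⟨hX1, hX1d⟩, ⟨hX2, hX2d⟩⟩⟩
    · exact ⟨⟨∅, ∅⟩, fun hc => absurd hc hS⟩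
  choose XX hXX using hbases
  obtain ⟨D, hBD, hDd, hDstrong⟩ := aux_exists_min h0 (pp.biUnion (fun S => (XX S).1 ∪ (XX S).2))
  have hDstrong' : AuxStrong A D := hDstrong
  have hDpstrong : AuxStrong A (D.filter (· ∈ P)) := aux_strong_filterP hP hDstrong'
  have hXXD : ∀ S ∈ pp, (XX S).1 ⊆ D ∧ (XX S).2 ⊆ D := by
    intro S hS
    have h1 := Finset.subset_biUnion_of_mem (fun S => (XX S).1 ∪ (XX S).2) hS
    constructor
    · exact (Finset.subset_union_left.trans h1).trans hBD
    · exact (Finset.subset_union_right.trans h1).trans hBD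
  -- fact1
  have fact1 : ∀ S ∈ pp, (Ga.sdim (⋂₀ ↑S) : ℤ)
      = A.delta (D.filter (· ∈ (⋂₀ ↑S : Set α))) := by
    intro S hS
    obtain ⟨hcl, hfin1, _⟩ := hSfacts S hS
    have hFI : ↑(D.filter (· ∈ (⋂₀ ↑S : Set α))) ⊆ (⋂₀ ↑S : Set α) :=
      fun x hx => (Finset.mem_filter.mp (Finset.mem_coe.mp hx)).2
    have hXF : (XX S).1 ⊆ D.filter (· ∈ (⋂₀ ↑S : Set α)) := by
      intro x hx
      exact Finset.mem_filter.mpr ⟨(hXXD S hS).1 hx, (hXX S hS).1.1 (Finset.mem_coe.mpr hx)⟩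
    have hdims : Ga.dim (D.filter (· ∈ (⋂₀ ↑S : Set α))) = Ga.sdim (⋂₀ ↑S) := by
      apply le_antisymm (aux_dim_le_sdim Ga hfin1 hFI)
      rw [← (hXX S hS).1.2]
      exact aux_dim_mono hga h0 hXF
    have hδ : A.delta (D.filter (· ∈ (⋂₀ ↑S : Set α)))
        = A.hdim (D.filter (· ∈ (⋂₀ ↑S : Set α))) :=
      aux_strong_inter_closed hga h0 hDstrong' hcl
    rw [← hdims, aux_dim_int hga, hδ]
  -- fact2
  have fact2 : ∀ S ∈ pp, (Ga.sdim ((⋂₀ ↑S : Set α) ∩ P) : ℤ)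
      = A.delta (D.filter (fun x => x ∈ (⋂₀ ↑S : Set α) ∧ x ∈ P)) := by
    intro S hS
    obtain ⟨hcl, _, hfin2⟩ := hSfacts S hS
    have hFp_eq : D.filter (fun x => x ∈ (⋂₀ ↑S : Set α) ∧ x ∈ P)
        = (D.filter (· ∈ P)).filter (· ∈ (⋂₀ ↑S : Set α)) := by
      ext x
      simp only [Finset.mem_filter]
      tauto
    have hFpI : ↑(D.filter (fun x => x ∈ (⋂₀ ↑S : Set α) ∧ x ∈ P))
        ⊆ ((⋂₀ ↑S : Set α) ∩ P) := by
      intro x hx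
      have h1 := (Finset.mem_filter.mp (Finset.mem_coe.mp hx)).2
      exact ⟨h1.1, h1.2⟩
    have hXF : (XX S).2 ⊆ D.filter (fun x => x ∈ (⋂₀ ↑S : Set α) ∧ x ∈ P) := by
      intro x hx
      have hx2 := (hXX S hS).2.1 (Finset.mem_coe.mpr hx)
      exact Finset.mem_filter.mpr ⟨(hXXD S hS).2 hx, hx2.1, hx2.2⟩
    have hdims : Ga.dim (D.filter (fun x => x ∈ (⋂₀ ↑S : Set α) ∧ x ∈ P))
        = Ga.sdim ((⋂₀ ↑S : Set α) ∩ P) := by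
      apply le_antisymm (aux_dim_le_sdim Ga hfin2 hFpI)
      rw [← (hXX S hS).2.2]
      exact aux_dim_mono hga h0 hXF
    have hδ : A.delta (D.filter (fun x => x ∈ (⋂₀ ↑S : Set α) ∧ x ∈ P))
        = A.hdim (D.filter (fun x => x ∈ (⋂₀ ↑S : Set α) ∧ x ∈ P)) := by
      rw [hFp_eq]
      exact aux_strong_inter_closed hga h0 hDpstrong hcl
    rw [← hdims, aux_dim_int hga, hδ]
  -- the section Sig'
  have hgex : ∀ T : Set α, ∃ E : Set α, T ∈ Sig.image (· ∩ P) → (E ∈ Sig ∧ E ∩ P = T) := by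
    intro T
    by_cases hT : T ∈ Sig.image (· ∩ P)
    · obtain ⟨E, hE, hfE⟩ := Finset.mem_image.mp hT
      exact ⟨E, fun _ => ⟨hE, hfE⟩⟩
    · exact ⟨∅, fun h => absurd h hT⟩
  choose g hg using hgex
  set Sig' : Finset (Set α) := (Sig.image (· ∩ P)).image g with hSig'
  have hSig'spec : ∀ E ∈ Sig', E ∈ Sig ∧ g (E ∩ P) = E := by
    intro E hE
    rw [hSig'] at hE
    obtain ⟨T, hT, rfl⟩ := Finset.mem_image.mp hE
    obtain ⟨h1, h2⟩ := hg T hT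
    exact ⟨h1, by rw [h2]⟩
  have hsub' : Sig' ⊆ Sig := fun E hE => (hSig'spec E hE).1
  have himg : Sig'.image (· ∩ P) = Sig.image (· ∩ P) := by
    apply Finset.Subset.antisymm
    · intro T hT
      obtain ⟨E, hE, rfl⟩ := Finset.mem_image.mp hT
      exact Finset.mem_image_of_mem _ (hsub' hE)
    · intro T hT
      rw [hSig']
      exact Finset.mem_image.mpr ⟨g T, Finset.mem_image_of_mem g hT, (hg T hT).2⟩
  have hinj : ∀ E₁ ∈ Sig', ∀ E₂ ∈ Sig', E₁ ∩ P = E₂ ∩ P → E₁ = E₂ := by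
    intro E₁ h1 E₂ h2 heq
    rw [← (hSig'spec E₁ h1).2, ← (hSig'spec E₂ h2).2, heq]
  -- intersections of images
  have hsinter : ∀ S : Finset (Set α), S.Nonempty →
      (⋂₀ ↑(S.image (· ∩ P)) : Set α) = (⋂₀ ↑S : Set α) ∩ P := by
    intro S hSne
    obtain ⟨E₀, hE₀⟩ := hSne
    have hmem : ∀ E ∈ S, (E ∩ P) ∈ (↑(S.image (· ∩ P)) : Set (Set α)) := fun E hE =>
      Finset.mem_coe.mpr (Finset.mem_image_of_mem _ hE)
    ext x
    rw [Set.mem_sInter, Set.mem_inter_iff, Set.mem_sInter]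
    constructor
    · intro h
      refine ⟨fun t ht => (h _ (hmem t (Finset.mem_coe.mp ht))).1, (h _ (hmem E₀ hE₀)).2⟩
    · rintro ⟨h1, h2⟩ t ht
      obtain ⟨E, hE, rfl⟩ := Finset.mem_image.mp (Finset.mem_coe.mp ht)
      exact ⟨h1 E (Finset.mem_coe.mpr hE), h2⟩
  -- step 2 : rewriting the LHS as a sum over subsets of Sig'
  have step2 : Gb.flatSum (Sig.image (· ∩ P))
      = ∑ S ∈ Sig'.powerset.filter (· ≠ ∅),
          (-1 : ℤ) ^ (S.card + 1) * (Ga.sdim ((⋂₀ ↑S : Set α) ∩ P) : ℤ) := by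
    rw [← himg]
    unfold Pregeometry.flatSum
    symm
    apply Finset.sum_nbij' (i := fun S => S.image (· ∩ P))
      (j := fun T => Sig'.filter (fun E => E ∩ P ∈ T))
    · -- hi
      intro S hS
      rw [Finset.mem_filter, Finset.mem_powerset] at hS ⊢
      refine ⟨Finset.image_subset_image hS.1, ?_⟩
      intro hc
      exact hS.2 (Finset.image_eq_empty.mp hc)
    · -- hj
      intro T hT
      rw [Finset.mem_filter, Finset.mem_powerset] at hT ⊢
      refine ⟨Finset.filter_subset _ _, ?_⟩
      obtain ⟨t, ht⟩ := Finset.nonempty_iff_ne_empty.mpr hT.2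
      obtain ⟨E, hE, rfl⟩ := Finset.mem_image.mp (hT.1 ht)
      intro hc
      have hmem : E ∈ Sig'.filter (fun E => E ∩ P ∈ T) := Finset.mem_filter.mpr ⟨hE, ht⟩
      rw [hc] at hmem
      exact absurd hmem (Finset.notMem_empty E)
    · -- left_inv
      intro S hS
      rw [Finset.mem_filter, Finset.mem_powerset] at hS
      ext E
      rw [Finset.mem_filter]
      constructor
      · rintro ⟨hE', hEP⟩
        obtain ⟨E₂, hE₂, hE₂eq⟩ := Finset.mem_image.mp hEP
        rwa [hinj E₂ (hS.1 hE₂) E hE' hE₂eq] at hE₂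
      · intro hE
        exact ⟨hS.1 hE, Finset.mem_image_of_mem _ hE⟩
    · -- right_inv
      intro T hT
      rw [Finset.mem_filter, Finset.mem_powerset] at hT
      ext t
      constructor
      · intro ht
        obtain ⟨E, hE, rfl⟩ := Finset.mem_image.mp ht
        exact (Finset.mem_filter.mp hE).2
      · intro ht
        obtain ⟨E, hE, rfl⟩ := Finset.mem_image.mp (hT.1 ht)
        exact Finset.mem_image_of_mem _ (Finset.mem_filter.mpr ⟨hE, ht⟩)
    · -- values
      intro S hS
      rw [Finset.mem_filter, Finset.mem_powerset] at hS
      have hSne : S.Nonempty := Finset.nonempty_iff_ne_empty.mpr hS.2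
      have hcard : (S.image (· ∩ P)).card = S.card := by
        apply Finset.card_image_of_injOn
        intro E₁ h1 E₂ h2 heq
        exact hinj E₁ (hS.1 h1) E₂ (hS.1 h2) heq
      rw [hcard, hsinter S hSne,
        (aux_sdim_agree hA hP hga hgb (Set.inter_subset_right)).1]
  -- step 3 : duplicates removal
  have hLL : ∀ n : ℕ, ∀ J : Finset (Set α), J.card ≤ n → Sig' ⊆ J → J ⊆ Sig →
      (∑ S ∈ J.powerset.filter (· ≠ ∅),
          (-1 : ℤ) ^ (S.card + 1) * (Ga.sdim ((⋂₀ ↑S : Set α) ∩ P) : ℤ))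
      = ∑ S ∈ Sig'.powerset.filter (· ≠ ∅),
          (-1 : ℤ) ^ (S.card + 1) * (Ga.sdim ((⋂₀ ↑S : Set α) ∩ P) : ℤ) := by
    intro n
    induction n with
    | zero =>
      intro J hJ h1 h2
      have hJ0 : J = ∅ := Finset.card_eq_zero.mp (le_antisymm hJ (Nat.zero_le _))
      have h1' : Sig' = ∅ := Finset.subset_empty.mp (hJ0 ▸ h1)
      rw [hJ0, h1']
    | succ n ih =>
      intro J hJcard h1 h2
      by_cases hJS : J ⊆ Sig'
      · rw [Finset.Subset.antisymm hJS h1]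
      · obtain ⟨E, hEJ, hES'⟩ := Finset.not_subset.mp hJS
        have hESig : E ∈ Sig := h2 hEJ
        have hT : E ∩ P ∈ Sig.image (· ∩ P) := Finset.mem_image_of_mem _ hESig
        rw [← himg] at hT
        obtain ⟨E', hE', hfE'⟩ := Finset.mem_image.mp hT
        have hne : E' ≠ E := fun hc => hES' (hc ▸ hE')
        have hE'J : E' ∈ J := h1 hE'
        have hrm := aux_removal (fun S => (Ga.sdim ((⋂₀ ↑S : Set α) ∩ P) : ℤ))
          J E E' hEJ hE'J hne ?_
        · rw [hrm]
          apply ih (J.erase E) ?_ ?_ ((Finset.erase_subset _ _).trans h2)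
          · have := Finset.card_erase_of_mem hEJ
            omega
          · intro x hx
            exact Finset.mem_erase.mpr ⟨fun hc => hES' (hc ▸ hx), h1 hx⟩
        · intro S hSJ hES hE'S
          have hsets : ((⋂₀ ↑(insert E' S) : Set α) ∩ P) = ((⋂₀ ↑S : Set α) ∩ P) := by
            rw [Finset.coe_insert, Set.sInter_insert]
            ext x
            constructor
            · rintro ⟨⟨_, hxI⟩, hxP⟩
              exact ⟨hxI, hxP⟩
            · rintro ⟨hxI, hxP⟩
              have hxE : x ∈ E := hxI E (Finset.mem_coe.mpr hES)
              have hxE' : x ∈ E' := by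
                have hmem : x ∈ E ∩ P := ⟨hxE, hxP⟩
                rw [← hfE'] at hmem
                exact hmem.1
              exact ⟨⟨hxE', hxI⟩, hxP⟩
          show (Ga.sdim ((⋂₀ ↑(insert E' S) : Set α) ∩ P) : ℤ)
            = (Ga.sdim ((⋂₀ ↑S : Set α) ∩ P) : ℤ)
          rw [hsets]
  -- step 4 : counting
  have key : ∀ S ∈ pp,
      A.delta (D.filter (· ∈ (⋂₀ ↑S : Set α)))
        - A.delta (D.filter (fun x => x ∈ (⋂₀ ↑S : Set α) ∧ x ∈ P))
        = (auxCnt D (fun u => ∀ E ∈ S, u ∈ E ∧ u ∉ P) : ℤ)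
          - (auxCnt (auxEIn A D)
              (fun e => ∀ E ∈ S, (∀ x ∈ e, x ∈ E) ∧ ¬ ∀ x ∈ e, x ∈ P) : ℤ) := by
    intro S hS
    rw [hpp, Finset.mem_filter, Finset.mem_powerset] at hS
    have hSne : S.Nonempty := Finset.nonempty_iff_ne_empty.mpr hS.2
    obtain ⟨E₀, hE₀⟩ := hSne
    have hc1 : (D.filter (· ∈ (⋂₀ ↑S : Set α))).card
        = auxCnt D (fun u => u ∈ (⋂₀ ↑S : Set α)) :=
      aux_cnt_card _ _ _ (fun x => Finset.mem_filter)
    have hc2 : (D.filter (fun x => x ∈ (⋂₀ ↑S : Set α) ∧ x ∈ P)).card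
        = auxCnt D (fun u => u ∈ (⋂₀ ↑S : Set α) ∧ u ∈ P) :=
      aux_cnt_card _ _ _ (fun x => Finset.mem_filter)
    have hc3 : (auxEIn A (D.filter (· ∈ (⋂₀ ↑S : Set α)))).card
        = auxCnt (auxEIn A D) (fun e => ∀ x ∈ e, x ∈ (⋂₀ ↑S : Set α)) := by
      apply aux_cnt_card
      intro e
      rw [aux_mem_eIn, aux_mem_eIn]
      constructor
      · rintro ⟨h1, h2⟩
        exact ⟨⟨fun x hx => (Finset.mem_filter.mp (h1 hx)).1, h2⟩,
          fun x hx => (Finset.mem_filter.mp (h1 hx)).2⟩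
      · rintro ⟨⟨h1, h2⟩, h3⟩
        exact ⟨fun x hx => Finset.mem_filter.mpr ⟨h1 hx, h3 x hx⟩, h2⟩
    have hc4 : (auxEIn A (D.filter (fun x => x ∈ (⋂₀ ↑S : Set α) ∧ x ∈ P))).card
        = auxCnt (auxEIn A D) (fun e => ∀ x ∈ e, x ∈ (⋂₀ ↑S : Set α) ∧ x ∈ P) := by
      apply aux_cnt_card
      intro e
      rw [aux_mem_eIn, aux_mem_eIn]
      constructor
      · rintro ⟨h1, h2⟩
        exact ⟨⟨fun x hx => (Finset.mem_filter.mp (h1 hx)).1, h2⟩,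
          fun x hx => (Finset.mem_filter.mp (h1 hx)).2⟩
      · rintro ⟨⟨h1, h2⟩, h3⟩
        exact ⟨fun x hx => Finset.mem_filter.mpr ⟨h1 hx, h3 x hx⟩, h2⟩
    have hs1 : (auxCnt D (fun u => u ∈ (⋂₀ ↑S : Set α)) : ℤ)
        = (auxCnt D (fun u => u ∈ (⋂₀ ↑S : Set α) ∧ u ∈ P) : ℤ)
          + (auxCnt D (fun u => u ∈ (⋂₀ ↑S : Set α) ∧ ¬ u ∈ P) : ℤ) :=
      aux_cnt_split D _ _
    have hs2 : (auxCnt (auxEIn A D) (fun e => ∀ x ∈ e, x ∈ (⋂₀ ↑S : Set α)) : ℤ)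
        = (auxCnt (auxEIn A D)
            (fun e => (∀ x ∈ e, x ∈ (⋂₀ ↑S : Set α)) ∧ ∀ x ∈ e, x ∈ P) : ℤ)
          + (auxCnt (auxEIn A D)
            (fun e => (∀ x ∈ e, x ∈ (⋂₀ ↑S : Set α)) ∧ ¬ ∀ x ∈ e, x ∈ P) : ℤ) :=
      aux_cnt_split (auxEIn A D) _ _
    have hg1 : (auxCnt D (fun u => u ∈ (⋂₀ ↑S : Set α) ∧ ¬ u ∈ P) : ℤ)
        = (auxCnt D (fun u => ∀ E ∈ S, u ∈ E ∧ u ∉ P) : ℤ) := by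
      apply aux_cnt_congr
      intro u _
      constructor
      · rintro ⟨h1, h2⟩
        exact fun E hE => ⟨Set.mem_sInter.mp h1 E (Finset.mem_coe.mpr hE), h2⟩
      · intro h
        exact ⟨Set.mem_sInter.mpr (fun t ht => (h t (Finset.mem_coe.mp ht)).1), (h E₀ hE₀).2⟩
    have hg2 : (auxCnt (auxEIn A D) (fun e => ∀ x ∈ e, x ∈ (⋂₀ ↑S : Set α) ∧ x ∈ P) : ℤ)
        = (auxCnt (auxEIn A D)
            (fun e => (∀ x ∈ e, x ∈ (⋂₀ ↑S : Set α)) ∧ ∀ x ∈ e, x ∈ P) : ℤ) := by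
      apply aux_cnt_congr
      intro e _
      constructor
      · intro h
        exact ⟨fun x hx => (h x hx).1, fun x hx => (h x hx).2⟩
      · rintro ⟨h1, h2⟩
        exact fun x hx => ⟨h1 x hx, h2 x hx⟩
    have hg3 : (auxCnt (auxEIn A D)
          (fun e => (∀ x ∈ e, x ∈ (⋂₀ ↑S : Set α)) ∧ ¬ ∀ x ∈ e, x ∈ P) : ℤ)
        = (auxCnt (auxEIn A D)
            (fun e => ∀ E ∈ S, (∀ x ∈ e, x ∈ E) ∧ ¬ ∀ x ∈ e, x ∈ P) : ℤ) := by
      apply aux_cnt_congr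
      intro e _
      constructor
      · rintro ⟨h1, h2⟩
        exact fun E hE =>
          ⟨fun x hx => Set.mem_sInter.mp (h1 x hx) E (Finset.mem_coe.mpr hE), h2⟩
      · intro h
        exact ⟨fun x hx => Set.mem_sInter.mpr
          (fun t ht => (h t (Finset.mem_coe.mp ht)).1 x hx), (h E₀ hE₀).2⟩
    rw [aux_delta_eq, aux_delta_eq, hc1, hc2, hc3, hc4]
    linarith [hs1, hs2, hg1, hg2, hg3]
  -- assembling the inequality between the two δ-sums
  have hsum : (∑ S ∈ pp, (-1 : ℤ) ^ (S.card + 1)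
        * A.delta (D.filter (fun x => x ∈ (⋂₀ ↑S : Set α) ∧ x ∈ P)))
      ≤ ∑ S ∈ pp, (-1 : ℤ) ^ (S.card + 1) * A.delta (D.filter (· ∈ (⋂₀ ↑S : Set α))) := by
    have hdiff : (∑ S ∈ pp, (-1 : ℤ) ^ (S.card + 1)
          * A.delta (D.filter (· ∈ (⋂₀ ↑S : Set α))))
        - (∑ S ∈ pp, (-1 : ℤ) ^ (S.card + 1)
          * A.delta (D.filter (fun x => x ∈ (⋂₀ ↑S : Set α) ∧ x ∈ P)))
        = (auxCnt D (fun u => ∃ E ∈ Sig, u ∈ E ∧ u ∉ P) : ℤ)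
          - (auxCnt (auxEIn A D)
              (fun e => ∃ E ∈ Sig, (∀ x ∈ e, x ∈ E) ∧ ¬ ∀ x ∈ e, x ∈ P) : ℤ) := by
      rw [← Finset.sum_sub_distrib]
      calc ∑ S ∈ pp, ((-1 : ℤ) ^ (S.card + 1) * A.delta (D.filter (· ∈ (⋂₀ ↑S : Set α)))
              - (-1 : ℤ) ^ (S.card + 1)
                * A.delta (D.filter (fun x => x ∈ (⋂₀ ↑S : Set α) ∧ x ∈ P)))
          = ∑ S ∈ pp, ((-1 : ℤ) ^ (S.card + 1)
                * (auxCnt D (fun u => ∀ E ∈ S, u ∈ E ∧ u ∉ P) : ℤ)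
              - (-1 : ℤ) ^ (S.card + 1)
                * (auxCnt (auxEIn A D)
                    (fun e => ∀ E ∈ S, (∀ x ∈ e, x ∈ E) ∧ ¬ ∀ x ∈ e, x ∈ P) : ℤ)) := by
            apply Finset.sum_congr rfl
            intro S hS
            have hk := key S hS
            linear_combination ((-1 : ℤ) ^ (S.card + 1)) * hk
        _ = (∑ S ∈ pp, (-1 : ℤ) ^ (S.card + 1)
                * (auxCnt D (fun u => ∀ E ∈ S, u ∈ E ∧ u ∉ P) : ℤ))
            - ∑ S ∈ pp, (-1 : ℤ) ^ (S.card + 1)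
                * (auxCnt (auxEIn A D)
                    (fun e => ∀ E ∈ S, (∀ x ∈ e, x ∈ E) ∧ ¬ ∀ x ∈ e, x ∈ P) : ℤ) :=
            Finset.sum_sub_distrib _ _
        _ = (auxCnt D (fun u => ∃ E ∈ Sig, u ∈ E ∧ u ∉ P) : ℤ)
            - (auxCnt (auxEIn A D)
                (fun e => ∃ E ∈ Sig, (∀ x ∈ e, x ∈ E) ∧ ¬ ∀ x ∈ e, x ∈ P) : ℤ) := by
            rw [hpp]
            rw [aux_master D Sig (fun u E => u ∈ E ∧ u ∉ P)
                (fun S u => ∀ E ∈ S, u ∈ E ∧ u ∉ P)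
                (fun u => ∃ E ∈ Sig, u ∈ E ∧ u ∉ P)
                (fun S u => Iff.rfl) (fun u => Iff.rfl),
              aux_master (auxEIn A D) Sig
                (fun e E => (∀ x ∈ e, x ∈ E) ∧ ¬ ∀ x ∈ e, x ∈ P)
                (fun S e => ∀ E ∈ S, (∀ x ∈ e, x ∈ E) ∧ ¬ ∀ x ∈ e, x ∈ P)
                (fun e => ∃ E ∈ Sig, (∀ x ∈ e, x ∈ E) ∧ ¬ ∀ x ∈ e, x ∈ P)
                (fun S e => Iff.rfl) (fun e => Iff.rfl)]
    have hfinal : (auxCnt (auxEIn A D)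
          (fun e => ∃ E ∈ Sig, (∀ x ∈ e, x ∈ E) ∧ ¬ ∀ x ∈ e, x ∈ P) : ℤ)
        ≤ (auxCnt D (fun u => ∃ E ∈ Sig, u ∈ E ∧ u ∉ P) : ℤ) := by
      rw [auxCnt_eq, auxCnt_eq]
      set W := D.filter (fun u => ∃ E ∈ Sig, u ∈ E) with hW
      have hV : D.filter (fun u => ∃ E ∈ Sig, u ∈ E ∧ u ∉ P)
          = W.filter (fun u => ¬ u ∈ P) := by
        ext x
        constructor
        · intro hx
          rw [Finset.mem_filter] at hx
          obtain ⟨hxD, E, hE, hh1, hh2⟩ := hx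
          rw [Finset.mem_filter]
          refine ⟨?_, hh2⟩
          rw [hW, Finset.mem_filter]
          exact ⟨hxD, E, hE, hh1⟩
        · intro hx
          rw [Finset.mem_filter] at hx
          obtain ⟨hxW, hh2⟩ := hx
          rw [hW, Finset.mem_filter] at hxW
          obtain ⟨hxD, E, hE, hh1⟩ := hxW
          rw [Finset.mem_filter]
          exact ⟨hxD, E, hE, hh1, hh2⟩
      have hss := hP W ((auxEIn A D).filter
        fun e => ∃ E ∈ Sig, (∀ x ∈ e, x ∈ E) ∧ ¬ ∀ x ∈ e, x ∈ P) ?_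
      · have hco : ((↑W : Set α) \ P) = ↑(W.filter (fun u => ¬ u ∈ P)) := by
          ext x
          simp
        rw [hco, Set.ncard_coe_finset] at hss
        rw [hV]
        exact_mod_cast hss
      · intro e he
        simp only [Finset.mem_filter] at he
        obtain ⟨heU, E, hESig, hesub, henP⟩ := he
        have heD : e ⊆ D := (aux_mem_eIn.mp heU).1
        refine ⟨(aux_mem_eIn.mp heU).2, ?_, ?_⟩
        · intro x hx
          have hxe : x ∈ e := Finset.mem_coe.mp hx
          refine Or.inl (Finset.mem_coe.mpr ?_)
          rw [hW, Finset.mem_filter]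
          exact ⟨heD hxe, E, hESig, hesub x hxe⟩
        · intro hc
          exact henP (fun x hx => hc (Finset.mem_coe.mpr hx))
    linarith
  -- final assembly
  have hR : Ga.flatSum Sig
      = ∑ S ∈ pp, (-1 : ℤ) ^ (S.card + 1) * A.delta (D.filter (· ∈ (⋂₀ ↑S : Set α))) := by
    unfold Pregeometry.flatSum
    rw [← hpp]
    apply Finset.sum_congr rfl
    intro S hS
    rw [fact1 S hS]
  have hLb : Gb.flatSum (Sig.image (· ∩ P))
      = ∑ S ∈ pp, (-1 : ℤ) ^ (S.card + 1)
          * A.delta (D.filter (fun x => x ∈ (⋂₀ ↑S : Set α) ∧ x ∈ P)) := by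
    rw [step2, ← hLL Sig.card Sig le_rfl hsub' Finset.Subset.rfl, ← hpp]
    apply Finset.sum_congr rfl
    intro S hS
    rw [fact2 S hS]
  rw [hR, hLb]
  exact hsum
end

section
/- If H ⊆ G is the subpregeometry induced on a closed subset of a pregeometry G, then the α-function of H is the restriction of the α-function of G: α_H(X) = α_G(X) for every finite X ⊆ H. -/
open scoped Classical

/-- A hypergraph on the vertex type `α`: a set of nonempty finite edges. -/
structure FileHypergraph (α : Type*) where
  edges : Set (Finset α)
  nonempty_edges : ∀ e ∈ edges, e ≠ ∅

namespace FileHypergraph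

variable {α : Type*} [DecidableEq α] (A : FileHypergraph α)

/-- The set of edges contained in a set of vertices. -/
def edgesIn (P : Set α) : Set (Finset α) := {e | e ∈ A.edges ∧ ↑e ⊆ P}

/-- The predimension `δ(P) = |P| − |R[P]|` of a finite set of vertices. -/
noncomputable def delta (P : Finset α) : ℤ :=
  (P.card : ℤ) - (A.edgesIn ↑P).ncard

/-- The relative predimension `δ(L/P) = |L∖P| − |R[L∪P]∖R[P]|`. -/
noncomputable def deltaRel (L : Finset α) (P : Set α) : ℤ :=
  ((↑L \ P : Set α).ncard : ℤ) -
    ({e | e ∈ A.edges ∧ ↑e ⊆ ↑L ∪ P ∧ ¬ ↑e ⊆ P} : Set (Finset α)).ncard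

/-- `P` is self-sufficient in `A`: `δ(X/P) ≥ 0` for every finite `X`, stated so
as to be meaningful even when infinitely many edges are involved. -/
def SelfSuff (P : Set α) : Prop :=
  ∀ X : Finset α, ∀ Es : Finset (Finset α),
    (∀ e ∈ Es, e ∈ A.edges ∧ ↑e ⊆ ↑X ∪ P ∧ ¬ ↑e ⊆ P) →
    (Es.card : ℤ) ≤ ((↑X \ P : Set α).ncard : ℤ)

/-- The dimension function associated to a hypergraph:
`d(X) = inf {δ(B) : X ⊆ B finite}`. -/
noncomputable def hdim (X : Finset α) : ℤ :=
  sInf {d : ℤ | ∃ B : Finset α, X ⊆ B ∧ d = A.delta B}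

/-- The induced subhypergraph on a set `P` of vertices (keeping `α` as the
ambient vertex type). -/
def restrict (P : Set α) : FileHypergraph α :=
  ⟨{e | e ∈ A.edges ∧ ↑e ⊆ P}, fun e he => A.nonempty_edges e he.1⟩

/-- A pregeometry `G` is represented by the hypergraph `A` if the associated
dimension function of `A` is the dimension function of `G`. -/
def Represents (G : Pregeometry α) : Prop :=
  ∀ X : Finset α, (G.dim X : ℤ) = A.hdim X

end FileHypergraph
/-- if `H` is the subpregeometry induced on a closed subset `P`
of `G`, then `α_H` is the restriction of `α_G`. -/
theorem alphaIn_closed_subset {α : Type*} [DecidableEq α] (G : Pregeometry α)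
    (P : Set α) (hP : G.IsClosed P) (X : Finset α) (hX : ↑X ⊆ P) :
    G.alphaIn P X = G.alphaIn Set.univ X := by
  induction X using Finset.strongInduction with
  | _ X ih =>
    have hXP : ↑X ⊆ P := hX
    rw [Pregeometry.alphaIn, Pregeometry.alphaIn]
    congr 1
    have hclosed : ∀ Y : Set α, Y ⊆ P →
        (G.IsClosedIn P Y ↔ G.IsClosedIn Set.univ Y) := by
      intro Y hYP
      constructor
      · rintro ⟨h1, h2⟩
        refine ⟨Set.subset_univ _, ?_⟩
        rw [Set.inter_univ]
        have hsub : G.cl Y ⊆ P := by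
          intro x hx
          obtain ⟨A, hA1, hA2⟩ := hx
          have : x ∈ G.cl P := ⟨A, hA1.trans hYP, hA2⟩
          rwa [hP] at this
        exact (Set.inter_eq_left.mpr hsub).symm.trans h2
      · rintro ⟨-, h2⟩
        rw [Set.inter_univ] at h2
        exact ⟨hYP, by rw [h2, Set.inter_eq_left.mpr hYP]⟩
    have hfilt : (X.powerset.filter fun Y => Y ≠ X ∧ G.IsClosedIn P ↑Y)
        = X.powerset.filter fun Y => Y ≠ X ∧ G.IsClosedIn Set.univ ↑Y := by
      apply Finset.filter_congr
      intro Y hY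
      simp only [Finset.mem_powerset] at hY
      have : (↑Y : Set α) ⊆ P := fun y hy => hXP (hY hy)
      rw [hclosed ↑Y this]
    rw [Finset.sum_attach _ (fun Y => G.alphaIn P Y),
        Finset.sum_attach _ (fun Y => G.alphaIn Set.univ Y), hfilt]
    apply Finset.sum_congr rfl
    intro Y hY
    simp only [Finset.mem_filter, Finset.mem_powerset] at hY
    exact ih Y (lt_of_le_of_ne hY.1 hY.2.1) (fun y hy => hXP (hY.1 hy))
end

section
/- Let G be a flat pregeometry on M, let A = (M,R) be a hypergraph representation of G, and let F be a finite closed subset of G. Then α_G(F) equals the number of edges r ∈ R with cl_G(r) = F. -/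
open scoped Classical

section AuxPregeom

variable {α : Type*} [DecidableEq α] (G : Pregeometry α)

lemma Pregeometry.dim_le_union (A B : Finset α) : G.dim A ≤ G.dim (A ∪ B) := by
  induction B using Finset.induction_on with
  | empty => simp
  | @insert a s _ ih =>
    calc G.dim A ≤ G.dim (A ∪ s) := ih
      _ ≤ G.dim (insert a (A ∪ s)) := G.dim_le_insert _ a
      _ = G.dim (A ∪ insert a s) := by rw [Finset.union_insert]

lemma Pregeometry.dim_mono {A B : Finset α} (h : A ⊆ B) : G.dim A ≤ G.dim B := by
  have := G.dim_le_union A B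
  rwa [Finset.union_eq_right.mpr h] at this

lemma Pregeometry.dim_insert_of_cl (a : α) {C D : Finset α}
    (hC : G.dim (insert a C) = G.dim C) (hCD : C ⊆ D) :
    G.dim (insert a D) = G.dim D := by
  by_cases ha : a ∈ D
  · rw [Finset.insert_eq_self.mpr ha]
  · have hsub := G.submodular (insert a C) D
    rw [Finset.insert_union, Finset.union_eq_right.mpr hCD,
      Finset.insert_inter_of_notMem ha, Finset.inter_eq_left.mpr hCD, hC] at hsub
    have := G.dim_le_insert D a
    omega

lemma Pregeometry.subset_cl (Y : Set α) : Y ⊆ G.cl Y := fun x hx =>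
  ⟨{x}, by simpa using hx, by rw [Finset.insert_eq_self.mpr (Finset.mem_singleton_self x)]⟩

lemma Pregeometry.cl_mono {Y Z : Set α} (h : Y ⊆ Z) : G.cl Y ⊆ G.cl Z := by
  rintro x ⟨A, hA, hd⟩
  exact ⟨A, hA.trans h, hd⟩

lemma Pregeometry.cl_cl_subset (Y : Set α) : G.cl (G.cl Y) ⊆ G.cl Y := by
  rintro x ⟨A, hA, hdim⟩
  have hA' : ∀ a : {a // a ∈ A}, ∃ C : Finset α, ↑C ⊆ Y ∧
      G.dim (insert a.1 C) = G.dim C := fun a => hA a.2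
  choose W hWsub hWdim using hA'
  set B : Finset α := A.attach.biUnion W with hB
  have hBY : (↑B : Set α) ⊆ Y := by
    intro b hb
    simp only [hB, Finset.coe_biUnion, Set.mem_iUnion, Finset.mem_coe] at hb
    obtain ⟨a, -, hbW⟩ := hb
    exact hWsub a hbW
  have key : ∀ A' : Finset α, A' ⊆ A → G.dim (B ∪ A') = G.dim B := by
    intro A'
    induction A' using Finset.induction_on with
    | empty => intro _; rw [Finset.union_empty]
    | @insert a s _ ih =>
      intro hsub
      have haA : a ∈ A := hsub (Finset.mem_insert_self a s)
      have hWB : W ⟨a, haA⟩ ⊆ B := Finset.subset_biUnion_of_mem W (Finset.mem_attach A ⟨a, haA⟩)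
      rw [Finset.union_insert,
        G.dim_insert_of_cl a (hWdim ⟨a, haA⟩) (hWB.trans Finset.subset_union_left),
        ih (fun y hy => hsub (Finset.mem_insert_of_mem hy))]
  have h1 : G.dim (insert x (B ∪ A)) = G.dim (B ∪ A) :=
    G.dim_insert_of_cl x hdim Finset.subset_union_right
  have h2 : G.dim (B ∪ A) = G.dim B := key A (Finset.Subset.refl A)
  have h3 : G.dim (insert x B) ≤ G.dim (insert x (B ∪ A)) :=
    G.dim_mono (Finset.insert_subset_insert x Finset.subset_union_left)
  have h4 : G.dim B ≤ G.dim (insert x B) := G.dim_le_insert B x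
  exact ⟨B, hBY, by omega⟩

lemma Pregeometry.cl_idem (Y : Set α) : G.cl (G.cl Y) = G.cl Y :=
  Set.Subset.antisymm (G.cl_cl_subset Y) (G.subset_cl _)

end AuxPregeom

section AuxHyper

variable {α : Type*} [DecidableEq α] (A : HGraph α) (G : Pregeometry α)

lemma HGraph.edgesIn_mono {P Q : Set α} (h : P ⊆ Q) : A.edgesIn P ⊆ A.edgesIn Q :=
  fun _ he => ⟨he.1, he.2.trans h⟩

lemma HGraph.edgesIn_subset_powerset (F : Finset α) :
    A.edgesIn ↑F ⊆ ↑F.powerset := fun e he => by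
  simpa [Finset.mem_powerset] using Finset.coe_subset.mp he.2

lemma HGraph.edgesIn_finite (F : Finset α) : (A.edgesIn ↑F).Finite :=
  F.powerset.finite_toSet.subset (A.edgesIn_subset_powerset F)

lemma HGraph.delta_union_le (X B : Finset α) :
    A.delta (X ∪ B) ≤ A.delta B + X.card := by
  have h1 : (X ∪ B).card ≤ B.card + X.card := by
    rw [Finset.union_comm]; exact Finset.card_union_le B X
  have h2 : (A.edgesIn ↑B).ncard ≤ (A.edgesIn ↑(X ∪ B)).ncard :=
    Set.ncard_le_ncard
      (A.edgesIn_mono (Finset.coe_subset.mpr Finset.subset_union_right))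
      (A.edgesIn_finite _)
  unfold HGraph.delta
  omega

lemma HGraph.bddBelow_rep {F : Finset α} (hrep : A.Represents G)
    (hF : G.IsClosed ↑F) :
    BddBelow {d : ℤ | ∃ B : Finset α, F ⊆ B ∧ d = A.delta B} := by
  by_contra h
  have hall : ∀ X : Finset α,
      ¬ BddBelow {d : ℤ | ∃ B : Finset α, X ⊆ B ∧ d = A.delta B} := by
    intro X
    rw [not_bddBelow_iff] at h ⊢
    intro b
    obtain ⟨y, ⟨B, hFB, rfl⟩, hy⟩ := h (b - X.card)
    refine ⟨A.delta (X ∪ B), ⟨X ∪ B, Finset.subset_union_left, rfl⟩, ?_⟩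
    have := A.delta_union_le X B
    omega
  have hdim0 : ∀ X : Finset α, G.dim X = 0 := by
    intro X
    have hd := hrep X
    rw [HGraph.hdim, Int.csInf_of_not_bddBelow (hall X)] at hd
    exact_mod_cast hd
  have huniv : ∀ x : α, x ∈ F := by
    intro x
    have hx : x ∈ G.cl ↑F := ⟨∅, by simp, by rw [hdim0, hdim0]⟩
    rw [hF] at hx
    exact hx
  apply h
  refine ⟨-(F.powerset.card : ℤ), ?_⟩
  rintro d ⟨B, _, rfl⟩
  have hBF : (↑B : Set α) ⊆ ↑F := fun x _ => huniv x
  have hcount : (A.edgesIn ↑B).ncard ≤ F.powerset.card := by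
    have hsub : A.edgesIn ↑B ⊆ ↑F.powerset :=
      (A.edgesIn_mono hBF).trans (A.edgesIn_subset_powerset F)
    calc (A.edgesIn ↑B).ncard ≤ (↑F.powerset : Set (Finset α)).ncard :=
          Set.ncard_le_ncard hsub F.powerset.finite_toSet
      _ = F.powerset.card := Set.ncard_coe_finset _
  unfold HGraph.delta
  omega

lemma HGraph.dim_le_delta {F X : Finset α} (hrep : A.Represents G)
    (hbdd : BddBelow {d : ℤ | ∃ B : Finset α, F ⊆ B ∧ d = A.delta B})
    (hFX : F ⊆ X) : (G.dim X : ℤ) ≤ A.delta X := by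
  have hsub : {d : ℤ | ∃ B : Finset α, X ⊆ B ∧ d = A.delta B} ⊆
      {d : ℤ | ∃ B : Finset α, F ⊆ B ∧ d = A.delta B} := by
    rintro d ⟨B, hXB, rfl⟩
    exact ⟨B, hFX.trans hXB, rfl⟩
  rw [hrep X, HGraph.hdim]
  exact csInf_le (hbdd.mono hsub) ⟨X, Finset.Subset.refl X, rfl⟩

lemma HGraph.delta_eq_dim {F : Finset α} (hrep : A.Represents G)
    (hF : G.IsClosed ↑F) : A.delta F = (G.dim F : ℤ) := by
  have hbdd := A.bddBelow_rep G hrep hF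
  have hne : Set.Nonempty {d : ℤ | ∃ B : Finset α, F ⊆ B ∧ d = A.delta B} :=
    ⟨A.delta F, F, Finset.Subset.refl F, rfl⟩
  obtain ⟨B, hFB, hB⟩ := Int.csInf_mem hne hbdd
  have h1 : (G.dim F : ℤ) = A.delta B := by rw [hrep F, HGraph.hdim, hB]
  have h2 : (G.dim B : ℤ) ≤ A.delta B := A.dim_le_delta G hrep hbdd hFB
  have h3 : G.dim F ≤ G.dim B := G.dim_mono hFB
  have hdimBF : G.dim B = G.dim F := by omega
  have hBF : B ⊆ F := by
    intro x hx
    have hle : G.dim (insert x F) ≤ G.dim B :=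
      G.dim_mono (Finset.insert_subset hx hFB)
    have hge : G.dim F ≤ G.dim (insert x F) := G.dim_le_insert F x
    have hx' : x ∈ G.cl ↑F := ⟨F, Finset.Subset.refl _, by omega⟩
    rw [hF] at hx'
    exact hx'
  have hBFeq : B = F := Finset.Subset.antisymm hBF hFB
  rw [h1, hBFeq]

end AuxHyper

set_option maxHeartbeats 1000000 in
/-- for `A` a hypergraph representation of a flat pregeometry `G`
and `F` a finite closed subset of `G`, `α_G(F)` is the number of edges `r` of
`A` with `cl_G(r) = F`. -/
theorem alpha_counts_edges {α : Type*} [DecidableEq α] (A : HGraph α)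
    (G : Pregeometry α) (hrep : A.Represents G) (hflat : G.FlatIn Set.univ)
    (F : Finset α) (hF : G.IsClosed ↑F) :
    G.alphaIn Set.univ F =
      ({r | r ∈ A.edges ∧ G.cl ↑r = ↑F} : Set (Finset α)).ncard := by
  clear hflat
  induction F using Finset.strongInduction with
  | _ F ih => ?_
  classical
  -- the finset of edges inside F
  set s : Finset (Finset α) := F.powerset.filter (fun r => r ∈ A.edges) with hs
  -- the finset of closed subsets of F
  set t : Finset (Finset α) := F.powerset.filter (fun Y => G.IsClosedIn Set.univ ↑Y) with ht
  -- the closure map, as a map to finsets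
  set f : Finset α → Finset α := fun r => F.filter (fun x => x ∈ G.cl ↑r) with hf
  have hmems : ∀ r : Finset α, r ∈ s ↔ r ⊆ F ∧ r ∈ A.edges := by
    intro r; rw [hs, Finset.mem_filter, Finset.mem_powerset]
  have hmemt : ∀ Y : Finset α, Y ∈ t ↔ Y ⊆ F ∧ G.IsClosedIn Set.univ ↑Y := by
    intro Y; rw [ht, Finset.mem_filter, Finset.mem_powerset]
  have fact1 : ∀ r ∈ s, (↑(f r) : Set α) = G.cl ↑r := by
    intro r hr
    have hrF : (↑r : Set α) ⊆ ↑F := Finset.coe_subset.mpr ((hmems r).mp hr).1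
    have hclsub : G.cl ↑r ⊆ ↑F := (G.cl_mono hrF).trans hF.subset
    ext x
    simp only [hf, Finset.coe_filter, Set.mem_setOf_eq]
    exact ⟨fun h => h.2, fun h => ⟨Finset.mem_coe.mp (hclsub h), h⟩⟩
  have fact2 : ∀ r ∈ s, f r ∈ t := by
    intro r hr
    rw [hmemt]
    refine ⟨Finset.filter_subset _ _, Set.subset_univ _, ?_⟩
    rw [Set.inter_univ, fact1 r hr]
    exact G.cl_idem ↑r
  have hFt : F ∈ t :=
    (hmemt F).mpr ⟨Finset.Subset.refl F, Set.subset_univ _, by rw [Set.inter_univ]; exact hF⟩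
  have fact3 : ∀ Y ∈ t, ({r | r ∈ A.edges ∧ G.cl ↑r = ↑Y} : Set (Finset α)) =
      ↑(s.filter (fun r => f r = Y)) := by
    intro Y hY
    have hYF : Y ⊆ F := ((hmemt Y).mp hY).1
    ext r
    simp only [Set.mem_setOf_eq, Finset.coe_filter, Finset.mem_filter]
    constructor
    · rintro ⟨hre, hcl⟩
      have hrF : r ⊆ F := by
        intro x hx
        have hx' : x ∈ G.cl ↑r := G.subset_cl ↑r (Finset.mem_coe.mpr hx)
        rw [hcl] at hx'
        exact hYF (Finset.mem_coe.mp hx')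
      have hrs : r ∈ s := (hmems r).mpr ⟨hrF, hre⟩
      refine ⟨hrs, ?_⟩
      apply Finset.coe_injective
      rw [fact1 r hrs, hcl]
    · rintro ⟨hrs, hfr⟩
      refine ⟨((hmems r).mp hrs).2, ?_⟩
      rw [← fact1 r hrs, hfr]
  -- fiberwise count
  have hcardsum : s.card = ∑ Y ∈ t, (s.filter (fun r => f r = Y)).card :=
    Finset.card_eq_sum_card_fiberwise fact2
  -- edges in F
  have hedges : (A.edgesIn ↑F).ncard = s.card := by
    have hEs : A.edgesIn ↑F = ↑s := by
      ext e
      simp only [HGraph.edgesIn, Set.mem_setOf_eq, Finset.mem_coe, hmems,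
        ← Finset.coe_subset, and_comm]
    rw [hEs, Set.ncard_coe_finset]
  have hdelta := A.delta_eq_dim G hrep hF
  unfold HGraph.delta at hdelta
  rw [hedges] at hdelta
  -- unfold alphaIn
  rw [Pregeometry.alphaIn]
  have herase : (F.powerset.filter fun Y => Y ≠ F ∧ G.IsClosedIn Set.univ ↑Y) = t.erase F := by
    ext Y
    simp only [Finset.mem_filter, Finset.mem_powerset, Finset.mem_erase, hmemt]
    tauto
  have hattach : ∑ Y ∈ (F.powerset.filter fun Y => Y ≠ F ∧ G.IsClosedIn Set.univ ↑Y).attach,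
      G.alphaIn Set.univ Y.1
      = ∑ Y ∈ t.erase F, G.alphaIn Set.univ Y := by
    rw [Finset.sum_attach _ (fun Y => G.alphaIn Set.univ Y), herase]
  rw [hattach]
  -- apply the induction hypothesis on each proper closed subset
  have hihY : ∀ Y ∈ t.erase F, G.alphaIn Set.univ Y =
      ((s.filter (fun r => f r = Y)).card : ℤ) := by
    intro Y hY
    have hYne : Y ≠ F := (Finset.mem_erase.mp hY).1
    have hYt : Y ∈ t := (Finset.mem_erase.mp hY).2
    have hYF : Y ⊂ F := lt_of_le_of_ne ((hmemt Y).mp hYt).1 hYne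
    have hYcl : G.IsClosed ↑Y := by
      have := ((hmemt Y).mp hYt).2.2
      rwa [Set.inter_univ] at this
    rw [ih Y hYF hYcl, fact3 Y hYt, Set.ncard_coe_finset]
  rw [Finset.sum_congr rfl hihY]
  -- final arithmetic
  rw [fact3 F hFt, Set.ncard_coe_finset]
  have hsplit : ((s.filter (fun r => f r = F)).card : ℤ)
      + ∑ Y ∈ t.erase F, ((s.filter (fun r => f r = Y)).card : ℤ)
      = (s.card : ℤ) := by
    rw [hcardsum]
    push_cast
    exact Finset.add_sum_erase t (fun Y => ((s.filter (fun r => f r = Y)).card : ℤ)) hFt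
  omega
end

section
/- Let G be a finite pregeometry and Σ a collection of closed subsets of G that is downward closed (if Y is closed and Y ⊆ X ∈ Σ then Y ∈ Σ). Then Δ_G(Σ) − d(G) = Σ_{X closed in G, X ∉ Σ} α_G(X) − |G ∖ ∪Σ|. -/
open scoped Classical

/-- A hypergraph on the vertex type `α`: a set of nonempty finite edges. -/
structure PHypergraph (α : Type*) where
  edges : Set (Finset α)
  nonempty_edges : ∀ e ∈ edges, e ≠ ∅

namespace PHypergraph

variable {α : Type*} [DecidableEq α] (A : PHypergraph α)

/-- The set of edges contained in a set of vertices. -/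
def edgesIn (P : Set α) : Set (Finset α) := {e | e ∈ A.edges ∧ ↑e ⊆ P}

/-- The predimension `δ(P) = |P| − |R[P]|` of a finite set of vertices. -/
noncomputable def delta (P : Finset α) : ℤ :=
  (P.card : ℤ) - (A.edgesIn ↑P).ncard

/-- The relative predimension `δ(L/P) = |L∖P| − |R[L∪P]∖R[P]|`. -/
noncomputable def deltaRel (L : Finset α) (P : Set α) : ℤ :=
  ((↑L \ P : Set α).ncard : ℤ) -
    ({e | e ∈ A.edges ∧ ↑e ⊆ ↑L ∪ P ∧ ¬ ↑e ⊆ P} : Set (Finset α)).ncard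

/-- `P` is self-sufficient in `A`: `δ(X/P) ≥ 0` for every finite `X`, stated so
as to be meaningful even when infinitely many edges are involved. -/
def SelfSuff (P : Set α) : Prop :=
  ∀ X : Finset α, ∀ Es : Finset (Finset α),
    (∀ e ∈ Es, e ∈ A.edges ∧ ↑e ⊆ ↑X ∪ P ∧ ¬ ↑e ⊆ P) →
    (Es.card : ℤ) ≤ ((↑X \ P : Set α).ncard : ℤ)

/-- The dimension function associated to a hypergraph:
`d(X) = inf {δ(B) : X ⊆ B finite}`. -/
noncomputable def hdim (X : Finset α) : ℤ :=
  sInf {d : ℤ | ∃ B : Finset α, X ⊆ B ∧ d = A.delta B}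

/-- The induced subhypergraph on a set `P` of vertices (keeping `α` as the
ambient vertex type). -/
def restrict (P : Set α) : PHypergraph α :=
  ⟨{e | e ∈ A.edges ∧ ↑e ⊆ P}, fun e he => A.nonempty_edges e he.1⟩

/-- A pregeometry `G` is represented by the hypergraph `A` if the associated
dimension function of `A` is the dimension function of `G`. -/
def Represents (G : Pregeometry α) : Prop :=
  ∀ X : Finset α, (G.dim X : ℤ) = A.hdim X

end PHypergraph

section Aux

namespace Pregeometry

variable {α : Type*} [DecidableEq α] (G : Pregeometry α)

lemma dim_mono_s15 {A B : Finset α} (h : A ⊆ B) : G.dim A ≤ G.dim B := by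
  have key : ∀ C : Finset α, G.dim A ≤ G.dim (A ∪ C) := by
    intro C
    induction C using Finset.induction_on with
    | empty => simp
    | @insert x C hx ih =>
      calc G.dim A ≤ G.dim (A ∪ C) := ih
        _ ≤ G.dim (insert x (A ∪ C)) := G.dim_le_insert _ _
        _ = G.dim (A ∪ insert x C) := by rw [Finset.union_insert]
  have := key B
  rwa [Finset.union_eq_right.mpr h] at this

lemma edim_coe (X : Finset α) : G.edim ↑X = (G.dim X : ℕ∞) := by
  apply le_antisymm
  · refine iSup₂_le fun A hA => ?_
    exact_mod_cast G.dim_mono_s15 (Finset.coe_subset.mp hA)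
  · exact le_iSup₂ (f := fun (A : Finset α) (_ : ↑A ⊆ (↑X : Set α)) => (G.dim A : ℕ∞))
      X subset_rfl

lemma sdim_coe (X : Finset α) : G.sdim ↑X = G.dim X := by
  rw [sdim, edim_coe, ENat.toNat_coe]

lemma subset_cl_s15 (Y : Set α) : Y ⊆ G.cl Y := by
  intro x hx
  refine ⟨{x}, by simpa using hx, ?_⟩
  rw [Finset.insert_eq_self.mpr (Finset.mem_singleton_self x)]

lemma cl_mono_s15 {Y Z : Set α} (h : Y ⊆ Z) : G.cl Y ⊆ G.cl Z := by
  rintro x ⟨A, hA, hd⟩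
  exact ⟨A, hA.trans h, hd⟩

lemma isClosed_univ : G.IsClosed Set.univ :=
  (Set.subset_univ _).antisymm (G.subset_cl_s15 _)

lemma IsClosed.inter {Y Z : Set α} (hY : G.IsClosed Y) (hZ : G.IsClosed Z) :
    G.IsClosed (Y ∩ Z) := by
  refine Set.Subset.antisymm (Set.subset_inter ?_ ?_) (G.subset_cl_s15 _)
  · have h := G.cl_mono_s15 (Set.inter_subset_left (s := Y) (t := Z))
    rwa [show G.cl Y = Y from hY] at h
  · have h := G.cl_mono_s15 (Set.inter_subset_right (s := Y) (t := Z))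
    rwa [show G.cl Z = Z from hZ] at h

lemma isClosedIn_univ_iff {Y : Set α} : G.IsClosedIn Set.univ Y ↔ G.IsClosed Y := by
  simp [IsClosedIn, IsClosed, Set.inter_univ]

variable [Fintype α]

lemma mem_inf_finset {S : Finset (Finset α)} {x : α} :
    x ∈ S.inf id ↔ ∀ E ∈ S, x ∈ E := by
  induction S using Finset.induction_on with
  | empty => simp
  | @insert E S hE ih => simp [Finset.inf_insert, ih]

lemma isClosed_inf {S : Finset (Finset α)} (hS : S.Nonempty)
    (h : ∀ E ∈ S, G.IsClosed ↑E) : G.IsClosed ↑(S.inf id) := by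
  refine Set.Subset.antisymm ?_ (G.subset_cl_s15 _)
  intro x hx
  obtain ⟨E₀, hE₀⟩ := hS
  have hmem : ∀ E ∈ S, x ∈ E := by
    intro E hE
    have hsub : (↑(S.inf id) : Set α) ⊆ ↑E := by
      exact_mod_cast Finset.coe_subset.mpr (Finset.inf_le hE)
    have := G.cl_mono_s15 hsub hx
    rwa [h E hE, Finset.mem_coe] at this
  exact Finset.mem_coe.mpr (mem_inf_finset.mpr hmem)

lemma coe_inf_eq (S : Finset (Finset α)) :
    (⋂₀ ↑(S.image (fun E : Finset α => (↑E : Set α))) : Set α) = ↑(S.inf id) := by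
  ext x
  simp only [Set.mem_sInter, Finset.coe_image, Set.mem_image, Finset.mem_coe,
    mem_inf_finset]
  constructor
  · intro h E hE
    exact h _ ⟨E, hE, rfl⟩
  · rintro h t ⟨E, hE, rfl⟩
    exact h E hE

lemma sum_alpha_closed (X : Finset α) (hX : G.IsClosed ↑X) :
    ∑ Y ∈ Finset.univ.filter (fun Y : Finset α => G.IsClosed ↑Y ∧ Y ⊆ X),
        G.alphaIn Set.univ Y
      = (X.card : ℤ) - G.dim X := by
  have h1 : G.alphaIn Set.univ X = (X.card : ℤ) - G.dim X -
      ∑ Y ∈ X.powerset.filter (fun Y => Y ≠ X ∧ G.IsClosedIn Set.univ ↑Y),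
        G.alphaIn Set.univ Y := by
    rw [alphaIn]
    congr 1
    exact Finset.sum_attach _ _
  have hset : Finset.univ.filter (fun Y : Finset α => G.IsClosed ↑Y ∧ Y ⊆ X)
      = insert X (X.powerset.filter (fun Y => Y ≠ X ∧ G.IsClosedIn Set.univ ↑Y)) := by
    ext Y
    simp only [Finset.mem_filter, Finset.mem_powerset, Finset.mem_univ, true_and,
      Finset.mem_insert, isClosedIn_univ_iff]
    constructor
    · rintro ⟨hc, hs⟩
      by_cases h : Y = X
      · left; exact h
      · right; exact ⟨hs, h, hc⟩
    · rintro (rfl | ⟨hs, _, hc⟩)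
      · exact ⟨hX, subset_rfl⟩
      · exact ⟨hc, hs⟩
  rw [hset, Finset.sum_insert (by simp), h1]
  ring

lemma ie_swap {β γ : Type*} [DecidableEq β] (Sig : Finset β) (F : Finset γ)
    (R : γ → β → Prop) (f : γ → ℤ) :
    ∑ S ∈ Sig.powerset.filter (· ≠ ∅), (-1 : ℤ) ^ (S.card + 1) *
        ∑ y ∈ F.filter (fun y => ∀ E ∈ S, R y E), f y
      = ∑ y ∈ F.filter (fun y => ∃ E ∈ Sig, R y E), f y := by
  have key : ∀ y ∈ F, (∑ S ∈ Sig.powerset.filter (· ≠ ∅), (-1 : ℤ) ^ (S.card + 1) *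
      (if ∀ E ∈ S, R y E then f y else 0))
      = if ∃ E ∈ Sig, R y E then f y else 0 := by
    intro y _
    set T := Sig.filter (fun E => R y E) with hT
    have hsub : T.powerset.filter (· ≠ ∅) ⊆ Sig.powerset.filter (· ≠ ∅) := by
      intro S hS
      simp only [Finset.mem_filter, Finset.mem_powerset] at hS ⊢
      exact ⟨hS.1.trans (Finset.filter_subset _ _), hS.2⟩
    have e1 : ∑ S ∈ Sig.powerset.filter (· ≠ ∅), (-1 : ℤ) ^ (S.card + 1) *
        (if ∀ E ∈ S, R y E then f y else 0)
        = ∑ S ∈ T.powerset.filter (· ≠ ∅), (-1 : ℤ) ^ (S.card + 1) * f y := by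
      rw [← Finset.sum_subset hsub]
      · apply Finset.sum_congr rfl
        intro S hS
        simp only [Finset.mem_filter, Finset.mem_powerset] at hS
        rw [if_pos]
        intro E hE
        exact (Finset.mem_filter.mp (hS.1 hE)).2
      · intro S hSig hS
        simp only [Finset.mem_filter, Finset.mem_powerset] at hSig hS
        rw [if_neg, mul_zero]
        intro h
        exact hS ⟨fun E hE => Finset.mem_filter.mpr ⟨hSig.1 hE, h E hE⟩, hSig.2⟩
    have h0 : T.powerset.filter (fun S => ¬ S ≠ ∅) = {∅} := by
      ext S
      simp only [Finset.mem_filter, Finset.mem_powerset, not_not, Finset.mem_singleton]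
      exact ⟨fun h => h.2, fun h => ⟨h ▸ Finset.empty_subset _, h⟩⟩
    have hsplit := Finset.sum_filter_add_sum_filter_not T.powerset (· ≠ ∅)
      (fun S => (-1 : ℤ) ^ (S.card + 1) * f y)
    rw [h0] at hsplit
    have hpow : ∑ S ∈ T.powerset, (-1 : ℤ) ^ (S.card + 1) * f y
        = -(if T = ∅ then (1 : ℤ) else 0) * f y := by
      rw [← Finset.sum_mul]
      congr 1
      calc ∑ S ∈ T.powerset, (-1 : ℤ) ^ (S.card + 1)
          = -∑ S ∈ T.powerset, (-1 : ℤ) ^ S.card := by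
            rw [← Finset.sum_neg_distrib]
            apply Finset.sum_congr rfl
            intro S _
            ring
        _ = -(if T = ∅ then 1 else 0) := by rw [Finset.sum_powerset_neg_one_pow_card]
    rw [Finset.sum_singleton, Finset.card_empty, pow_one] at hsplit
    have hTne : T = ∅ ↔ ¬ ∃ E ∈ Sig, R y E := by
      rw [hT, Finset.filter_eq_empty_iff]
      push_neg
      rfl
    rw [e1]
    by_cases hE : ∃ E ∈ Sig, R y E
    · have hT0 : T ≠ ∅ := fun h => (hTne.mp h) hE
      rw [if_pos hE]
      rw [if_neg hT0] at hpow
      linarith [hsplit, hpow]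
    · have hT0 : T = ∅ := hTne.mpr hE
      rw [if_neg hE]
      rw [if_pos hT0] at hpow
      linarith [hsplit, hpow]
  calc ∑ S ∈ Sig.powerset.filter (· ≠ ∅), (-1 : ℤ) ^ (S.card + 1) *
        ∑ y ∈ F.filter (fun y => ∀ E ∈ S, R y E), f y
      = ∑ S ∈ Sig.powerset.filter (· ≠ ∅), ∑ y ∈ F, (-1 : ℤ) ^ (S.card + 1) *
          (if ∀ E ∈ S, R y E then f y else 0) := by
        refine Finset.sum_congr rfl fun S _ => ?_
        rw [Finset.sum_filter, Finset.mul_sum]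
    _ = ∑ y ∈ F, ∑ S ∈ Sig.powerset.filter (· ≠ ∅), (-1 : ℤ) ^ (S.card + 1) *
          (if ∀ E ∈ S, R y E then f y else 0) := Finset.sum_comm
    _ = ∑ y ∈ F, (if ∃ E ∈ Sig, R y E then f y else 0) := Finset.sum_congr rfl key
    _ = _ := (Finset.sum_filter _ _).symm

lemma image_coe_eq (Sig : Finset (Finset α)) :
    (Sig.image (fun E => (↑E : Set α)))
      = Finset.image (fun E : Finset α => (↑E : Set α)) Sig := by
  simp
  rfl

lemma flatSum_image_coe (Sig : Finset (Finset α)) :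
    G.flatSum (Finset.image (fun E : Finset α => (↑E : Set α)) Sig)
      = ∑ S ∈ Sig.powerset.filter (· ≠ ∅),
          (-1 : ℤ) ^ (S.card + 1) * (G.dim (S.inf id) : ℤ) := by
  rw [flatSum]
  symm
  apply Finset.sum_bij (i := fun (S : Finset (Finset α)) (_ : S ∈ Sig.powerset.filter (· ≠ ∅)) =>
    Finset.image (fun E : Finset α => (↑E : Set α)) S)
  · intro S hS
    simp only [Finset.mem_filter, Finset.mem_powerset] at hS ⊢
    refine ⟨Finset.image_subset_image hS.1, ?_⟩
    simpa [Finset.image_eq_empty] using hS.2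
  · intro S1 h1 S2 h2 heq
    exact Finset.image_injective Finset.coe_injective heq
  · intro T hT
    simp only [Finset.mem_filter, Finset.mem_powerset] at hT
    refine ⟨Sig.filter (fun E' : Finset α => (↑E' : Set α) ∈ T), ?_, ?_⟩
    · simp only [Finset.mem_filter, Finset.mem_powerset]
      refine ⟨Finset.filter_subset _ _, ?_⟩
      intro h
      apply hT.2
      ext t
      simp only [Finset.notMem_empty, iff_false]
      intro ht
      obtain ⟨E, hE, rfl⟩ := Finset.mem_image.mp (hT.1 ht)
      have hmem : E ∈ Sig.filter (fun E' : Finset α => (↑E' : Set α) ∈ T) :=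
        Finset.mem_filter.mpr ⟨hE, ht⟩
      rw [h] at hmem
      exact absurd hmem (Finset.notMem_empty _)
    · ext t
      simp only [Finset.mem_image, Finset.mem_filter]
      constructor
      · rintro ⟨E, ⟨hE, ht⟩, rfl⟩
        exact ht
      · intro ht
        obtain ⟨E, hE, rfl⟩ := Finset.mem_image.mp (hT.1 ht)
        exact ⟨E, ⟨hE, ht⟩, rfl⟩
  · intro S hS
    rw [Finset.card_image_of_injective _ Finset.coe_injective, coe_inf_eq, sdim_coe]

end Pregeometry

end Aux

/-- for a finite pregeometry `G` and a downward-closed collection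
`Σ` of closed subsets, `Δ_G(Σ) − d(G) = Σ_{X closed, X ∉ Σ} α_G(X) − |G ∖ ⋃Σ|`. -/
theorem flatSum_sub_dim_eq_alpha_sum {α : Type*} [DecidableEq α] [Fintype α]
    (G : Pregeometry α) (Sig : Finset (Finset α))
    (hcl : ∀ E ∈ Sig, G.IsClosed ↑E)
    (hdc : ∀ E ∈ Sig, ∀ Y : Finset α, G.IsClosed ↑Y → Y ⊆ E → Y ∈ Sig) :
    G.flatSum (Sig.image (fun E => (↑E : Set α))) - (G.dim Finset.univ : ℤ) =
      (∑ X ∈ Finset.univ.filter (fun X : Finset α => G.IsClosed ↑X ∧ X ∉ Sig),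
        G.alphaIn Set.univ X) - ((Finset.univ \ Sig.sup id).card : ℤ) := by
  classical
  have swapA := Pregeometry.ie_swap Sig (Finset.univ : Finset (Finset α))
    (fun Y E => G.IsClosed ↑Y ∧ Y ⊆ E) (G.alphaIn Set.univ)
  have swapB := Pregeometry.ie_swap Sig (Finset.univ : Finset α)
    (fun y E => y ∈ E) (fun _ => (1 : ℤ))
  have hiffA : ∀ Y : Finset α, (∃ E ∈ Sig, G.IsClosed ↑Y ∧ Y ⊆ E) ↔ Y ∈ Sig := by
    intro Y
    constructor
    · rintro ⟨E, hE, hc, hYE⟩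
      exact hdc E hE Y hc hYE
    · intro h
      exact ⟨Y, h, hcl Y h, subset_rfl⟩
  have hiffB : ∀ y : α, (∃ E ∈ Sig, y ∈ E) ↔ y ∈ Sig.sup id := by
    intro y
    simp [Finset.mem_sup]
  simp only [hiffA] at swapA
  simp only [hiffB] at swapB
  rw [Finset.filter_mem_eq_inter, Finset.univ_inter] at swapA
  rw [Finset.filter_mem_eq_inter, Finset.univ_inter] at swapB
  have hΔ : G.flatSum (Sig.image (fun E => (↑E : Set α)))
      = ((Sig.sup id).card : ℤ) - ∑ Y ∈ Sig, G.alphaIn Set.univ Y := by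
    rw [Pregeometry.image_coe_eq, G.flatSum_image_coe, ← swapA,
      show ((Sig.sup id).card : ℤ) = ∑ y ∈ Sig.sup id, (1 : ℤ) by simp, ← swapB,
      ← Finset.sum_sub_distrib]
    refine Finset.sum_congr rfl fun S hS => ?_
    rw [Finset.mem_filter, Finset.mem_powerset] at hS
    have hne : S.Nonempty := Finset.nonempty_iff_ne_empty.mpr hS.2
    obtain ⟨E₀, hE₀⟩ := hne
    have hclS : G.IsClosed ↑(S.inf id) :=
      G.isClosed_inf ⟨E₀, hE₀⟩ fun E hE => hcl E (hS.1 hE)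
    have hiffS : ∀ Y : Finset α, (∀ E ∈ S, G.IsClosed ↑Y ∧ Y ⊆ E)
        ↔ (G.IsClosed ↑Y ∧ Y ⊆ S.inf id) := by
      intro Y
      constructor
      · intro h
        exact ⟨(h E₀ hE₀).1, Finset.le_inf fun E hE => (h E hE).2⟩
      · rintro ⟨hc, hs⟩ E hE
        refine ⟨hc, hs.trans ?_⟩
        intro x hx
        exact Pregeometry.mem_inf_finset.mp hx E hE
    have hiffS2 : ∀ y : α, (∀ E ∈ S, y ∈ E) ↔ y ∈ S.inf id := by
      intro y
      exact Pregeometry.mem_inf_finset.symm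
    simp only [hiffS, hiffS2]
    rw [Finset.filter_mem_eq_inter, Finset.univ_inter, Finset.sum_const, nsmul_eq_mul,
      mul_one, G.sum_alpha_closed _ hclS]
    ring
  have hTot : (∑ Y ∈ Sig, G.alphaIn Set.univ Y)
      + (∑ X ∈ Finset.univ.filter (fun X : Finset α => G.IsClosed ↑X ∧ X ∉ Sig),
          G.alphaIn Set.univ X)
      = ((Finset.univ : Finset α).card : ℤ) - G.dim Finset.univ := by
    have huniv : G.IsClosed ↑(Finset.univ : Finset α) := by
      rw [Finset.coe_univ]
      exact G.isClosed_univ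
    have htot := G.sum_alpha_closed Finset.univ huniv
    rw [← htot]
    have hfil : ∀ Y : Finset α, (G.IsClosed ↑Y ∧ Y ⊆ Finset.univ) ↔ G.IsClosed ↑Y := by
      intro Y
      simp [Finset.subset_univ]
    simp only [hfil]
    rw [← Finset.sum_filter_add_sum_filter_not
      (Finset.univ.filter (fun Y : Finset α => G.IsClosed ↑Y)) (· ∈ Sig) (G.alphaIn Set.univ)]
    congr 1
    · refine Finset.sum_congr ?_ (fun _ _ => rfl)
      ext Y
      simp only [Finset.mem_filter, Finset.mem_univ, true_and]
      exact ⟨fun h => ⟨hcl Y h, h⟩, fun h => h.2⟩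
    · refine Finset.sum_congr ?_ (fun _ _ => rfl)
      ext Y
      simp only [Finset.mem_filter, Finset.mem_univ, true_and, and_assoc]
  have hcard : ((Finset.univ \ Sig.sup id).card : ℤ)
      = ((Finset.univ : Finset α).card : ℤ) - ((Sig.sup id).card : ℤ) := by
    rw [Finset.card_sdiff_of_subset (Finset.subset_univ _)]
    have hle := Finset.card_le_card (Finset.subset_univ (Sig.sup id))
    push_cast [hle]
    ring
  rw [hΔ, hcard]
  linarith [hTot]
end

section
/- A finite pregeometry G is flat if and only if α_G(X) ≥ 0 whenever X ⊆ G is a union of closed sets. -/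
open scoped Classical

/-- A hypergraph on the vertex type `α`: a set of nonempty finite edges. -/
structure PaperHypergraph (α : Type*) where
  edges : Set (Finset α)
  nonempty_edges : ∀ e ∈ edges, e ≠ ∅

namespace PaperHypergraph

variable {α : Type*} [DecidableEq α] (A : PaperHypergraph α)

/-- The set of edges contained in a set of vertices. -/
def edgesIn (P : Set α) : Set (Finset α) := {e | e ∈ A.edges ∧ ↑e ⊆ P}

/-- The predimension `δ(P) = |P| − |R[P]|` of a finite set of vertices. -/
noncomputable def delta (P : Finset α) : ℤ :=
  (P.card : ℤ) - (A.edgesIn ↑P).ncard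

/-- The relative predimension `δ(L/P) = |L∖P| − |R[L∪P]∖R[P]|`. -/
noncomputable def deltaRel (L : Finset α) (P : Set α) : ℤ :=
  ((↑L \ P : Set α).ncard : ℤ) -
    ({e | e ∈ A.edges ∧ ↑e ⊆ ↑L ∪ P ∧ ¬ ↑e ⊆ P} : Set (Finset α)).ncard

/-- `P` is self-sufficient in `A`: `δ(X/P) ≥ 0` for every finite `X`, stated so
as to be meaningful even when infinitely many edges are involved. -/
def SelfSuff (P : Set α) : Prop :=
  ∀ X : Finset α, ∀ Es : Finset (Finset α),
    (∀ e ∈ Es, e ∈ A.edges ∧ ↑e ⊆ ↑X ∪ P ∧ ¬ ↑e ⊆ P) →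
    (Es.card : ℤ) ≤ ((↑X \ P : Set α).ncard : ℤ)

/-- The dimension function associated to a hypergraph:
`d(X) = inf {δ(B) : X ⊆ B finite}`. -/
noncomputable def hdim (X : Finset α) : ℤ :=
  sInf {d : ℤ | ∃ B : Finset α, X ⊆ B ∧ d = A.delta B}

/-- The induced subhypergraph on a set `P` of vertices (keeping `α` as the
ambient vertex type). -/
def restrict (P : Set α) : PaperHypergraph α :=
  ⟨{e | e ∈ A.edges ∧ ↑e ⊆ P}, fun e he => A.nonempty_edges e he.1⟩

/-- A pregeometry `G` is represented by the hypergraph `A` if the associated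
dimension function of `A` is the dimension function of `G`. -/
def Represents (G : Pregeometry α) : Prop :=
  ∀ X : Finset α, (G.dim X : ℤ) = A.hdim X

end PaperHypergraph

namespace PG17

open Finset

variable {α : Type*} [DecidableEq α] [Fintype α] (G : Pregeometry α)

lemma dim_union_left (A C : Finset α) : G.dim A ≤ G.dim (A ∪ C) := by
  classical
  induction C using Finset.induction_on with
  | empty => simp
  | @insert x C hx ih =>
      calc G.dim A ≤ G.dim (A ∪ C) := ih
        _ ≤ G.dim (insert x (A ∪ C)) := G.dim_le_insert _ _
        _ = G.dim (A ∪ insert x C) := by rw [Finset.union_insert]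

lemma dim_mono {A B : Finset α} (h : A ⊆ B) : G.dim A ≤ G.dim B := by
  have h2 := dim_union_left G A B
  rwa [Finset.union_eq_right.mpr h] at h2

lemma subset_cl (S : Set α) : S ⊆ G.cl S := by
  intro x hx
  exact ⟨{x}, by simpa using hx,
    by rw [Finset.insert_eq_self.mpr (Finset.mem_singleton_self x)]⟩

lemma cl_mono {S T : Set α} (h : S ⊆ T) : G.cl S ⊆ G.cl T := by
  rintro x ⟨A, hA, hd⟩
  exact ⟨A, hA.trans h, hd⟩

lemma mem_cl_finset {x : α} {A : Finset α} :
    x ∈ G.cl ↑A ↔ G.dim (insert x A) = G.dim A := by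
  constructor
  · rintro ⟨B, hB, hd⟩
    have hBA : B ⊆ A := by exact_mod_cast hB
    have hsub := G.submodular (insert x B) A
    have h1 : insert x B ∪ A = insert x A := by
      rw [Finset.insert_union, Finset.union_eq_right.mpr hBA]
    rw [h1] at hsub
    have h2 : B ⊆ insert x B ∩ A :=
      Finset.subset_inter (Finset.subset_insert x B) hBA
    have h3 := dim_mono G h2
    have h4 := G.dim_le_insert A x
    omega
  · intro h
    exact ⟨A, subset_rfl, h⟩

lemma dim_union_cl {A B : Finset α} (h : ↑B ⊆ G.cl ↑A) :
    G.dim (A ∪ B) = G.dim A := by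
  classical
  induction B using Finset.induction_on with
  | empty => simp
  | @insert x B hx ih =>
      have hB : ↑B ⊆ G.cl ↑A := by
        intro y hy
        exact h (by simp [hy])
      have hx1 : x ∈ G.cl ↑A := h (by simp)
      have hx2 : x ∈ G.cl ↑(A ∪ B) := cl_mono G (by simp) hx1
      rw [Finset.union_insert, (mem_cl_finset G).mp hx2, ih hB]

lemma isClosed_cl (S : Set α) : G.IsClosed (G.cl S) := by
  unfold Pregeometry.IsClosed
  apply subset_antisymm _ (subset_cl G _)
  rintro x ⟨A, hA, hd⟩
  set Sf := S.toFinset with hSfdef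
  have hS : S = ↑Sf := (Set.coe_toFinset S).symm
  have hA' : ↑A ⊆ G.cl ↑Sf := by rw [← hS]; exact hA
  have h1 : G.dim (Sf ∪ A) = G.dim Sf := dim_union_cl G hA'
  have hx : x ∈ G.cl ↑A := (mem_cl_finset G).mpr hd
  have hx2 : x ∈ G.cl ↑(Sf ∪ A) := cl_mono G (by simp) hx
  have h2 : G.dim (insert x (Sf ∪ A)) = G.dim (Sf ∪ A) := (mem_cl_finset G).mp hx2
  have h3 : G.dim (insert x Sf) ≤ G.dim (insert x (Sf ∪ A)) := by
    apply dim_mono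
    intro y hy
    simp only [Finset.mem_insert, Finset.mem_union] at hy ⊢
    tauto
  have h4 : G.dim Sf ≤ G.dim (insert x Sf) := G.dim_le_insert _ _
  have h5 : G.dim (insert x Sf) = G.dim Sf := by omega
  rw [hS]
  exact (mem_cl_finset G).mpr h5

lemma edim_eq (Y : Set α) : G.edim Y = (G.dim Y.toFinset : ℕ∞) := by
  unfold Pregeometry.edim
  apply le_antisymm
  · apply iSup₂_le
    intro A hA
    exact_mod_cast Nat.cast_le.mpr (dim_mono G (fun a ha => Set.mem_toFinset.mpr (hA ha)))
  · exact le_iSup₂_of_le Y.toFinset (by simp) le_rfl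

lemma sdim_eq (Y : Set α) : G.sdim Y = G.dim Y.toFinset := by
  rw [Pregeometry.sdim, edim_eq]; simp

lemma sdim_coe (Y : Set α) (X : Finset α) (h : Y = ↑X) : G.sdim Y = G.dim X := by
  subst h
  rw [sdim_eq, Finset.toFinset_coe]

lemma edim_ne_top (Y : Set α) : G.edim Y ≠ ⊤ := by
  rw [edim_eq]; simp

lemma isClosedIn_univ (S : Set α) : G.IsClosedIn Set.univ S ↔ G.IsClosed S := by
  unfold Pregeometry.IsClosedIn Pregeometry.IsClosed
  simp [Set.inter_univ]

/-- The proper closed subsets of `X`. -/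
noncomputable def pflats (X : Finset α) : Finset (Finset α) :=
  Finset.univ.filter fun Y => G.IsClosed ↑Y ∧ Y ⊆ X ∧ Y ≠ X

lemma alpha_rec (X : Finset α) :
    G.alphaIn Set.univ X = (X.card : ℤ) - (G.dim X : ℤ) -
      ∑ Y ∈ pflats G X, G.alphaIn Set.univ Y := by
  rw [Pregeometry.alphaIn, Finset.sum_attach]
  congr 1
  apply Finset.sum_congr _ (fun _ _ => rfl)
  ext Y
  simp only [pflats, Finset.mem_filter, Finset.mem_powerset, Finset.mem_univ, true_and,
    isClosedIn_univ]
  tauto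

/-- The closed subsets of a set `S`. -/
noncomputable def flats (S : Set α) : Finset (Finset α) :=
  Finset.univ.filter fun Y => G.IsClosed ↑Y ∧ ↑Y ⊆ S

lemma dim_closed (F : Finset α) (hF : G.IsClosed ↑F) :
    (G.dim F : ℤ) = (F.card : ℤ) - ∑ Y ∈ flats G ↑F, G.alphaIn Set.univ Y := by
  have h1 : flats G (↑F : Set α) = insert F (pflats G F) := by
    ext Y
    simp only [flats, pflats, Finset.mem_filter, Finset.mem_univ, true_and, Finset.mem_insert,
      ← Finset.coe_subset]
    constructor
    · rintro ⟨h2, h3⟩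
      by_cases hYF : Y = F
      · exact Or.inl hYF
      · exact Or.inr ⟨h2, h3, hYF⟩
    · rintro (rfl | ⟨h2, h3, h4⟩)
      · exact ⟨hF, subset_rfl⟩
      · exact ⟨h2, h3⟩
  have h2 : F ∉ pflats G F := by simp [pflats]
  rw [h1, Finset.sum_insert h2, alpha_rec]
  ring

lemma coreIE (Sig : Finset (Set α)) (p : Set α → Prop) (c : ℤ) :
    ∑ S ∈ Sig.powerset.filter (· ≠ ∅),
        (-1 : ℤ) ^ (S.card + 1) * (if ∀ E ∈ S, p E then c else 0)
      = if ∃ E ∈ Sig, p E then c else 0 := by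
  classical
  set T := Sig.filter p with hT
  have hmemT : ∀ S : Finset (Set α), S ⊆ T ↔ S ⊆ Sig ∧ ∀ E ∈ S, p E := by
    intro S
    constructor
    · intro h
      refine ⟨h.trans (Finset.filter_subset _ _), fun E hE => ?_⟩
      have := h hE
      rw [hT, Finset.mem_filter] at this
      exact this.2
    · rintro ⟨h1, h2⟩ E hE
      rw [hT, Finset.mem_filter]
      exact ⟨h1 hE, h2 E hE⟩
  have hsub : T.powerset.filter (· ≠ ∅) ⊆ Sig.powerset.filter (· ≠ ∅) := by
    intro S hS
    simp only [Finset.mem_filter, Finset.mem_powerset] at hS ⊢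
    exact ⟨((hmemT S).mp hS.1).1, hS.2⟩
  have hzero : ∀ S ∈ Sig.powerset.filter (· ≠ ∅), S ∉ T.powerset.filter (· ≠ ∅) →
      (-1 : ℤ) ^ (S.card + 1) * (if ∀ E ∈ S, p E then c else 0) = 0 := by
    intro S hS hS2
    simp only [Finset.mem_filter, Finset.mem_powerset] at hS hS2
    have : ¬ (∀ E ∈ S, p E) := by
      intro hall
      exact hS2 ⟨(hmemT S).mpr ⟨hS.1, hall⟩, hS.2⟩
    rw [if_neg this, mul_zero]
  rw [← Finset.sum_subset hsub hzero]
  have hc : ∀ S ∈ T.powerset.filter (· ≠ ∅),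
      (-1 : ℤ) ^ (S.card + 1) * (if ∀ E ∈ S, p E then c else 0)
        = (-1 : ℤ) ^ (S.card + 1) * c := by
    intro S hS
    simp only [Finset.mem_filter, Finset.mem_powerset] at hS
    rw [if_pos ((hmemT S).mp hS.1).2]
  rw [Finset.sum_congr rfl hc, ← Finset.sum_mul]
  have hkey : ∑ S ∈ T.powerset.filter (· ≠ ∅), (-1 : ℤ) ^ (S.card + 1)
      = 1 - (if T = ∅ then 1 else 0) := by
    have h0 : ∑ S ∈ T.powerset, (-1 : ℤ) ^ S.card = if T = ∅ then 1 else 0 :=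
      Finset.sum_powerset_neg_one_pow_card
    have hsplit : ∑ S ∈ T.powerset, (-1 : ℤ) ^ (S.card + 1)
        = (∑ S ∈ T.powerset.filter (· ≠ ∅), (-1 : ℤ) ^ (S.card + 1)) + (-1) := by
      rw [← Finset.sum_filter_add_sum_filter_not T.powerset (· ≠ ∅)]
      congr 1
      have : T.powerset.filter (fun S => ¬ S ≠ ∅) = {∅} := by
        ext S
        simp only [Finset.mem_filter, Finset.mem_powerset, not_not, Finset.mem_singleton]
        constructor
        · exact fun h => h.2
        · rintro rfl; exact ⟨Finset.empty_subset _, rfl⟩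
      rw [this, Finset.sum_singleton]
      simp
    have hfull : ∑ S ∈ T.powerset, (-1 : ℤ) ^ (S.card + 1)
        = -(if T = ∅ then 1 else 0) := by
      calc ∑ S ∈ T.powerset, (-1 : ℤ) ^ (S.card + 1)
          = ∑ S ∈ T.powerset, (-1 : ℤ) ^ S.card * (-1) := by
            apply Finset.sum_congr rfl; intro S _; rw [pow_succ]
        _ = (∑ S ∈ T.powerset, (-1 : ℤ) ^ S.card) * (-1) := by rw [Finset.sum_mul]
        _ = -(if T = ∅ then 1 else 0) := by rw [h0]; ring
    rw [hsplit] at hfull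
    linarith
  rw [hkey]
  have hTiff : T ≠ ∅ ↔ ∃ E ∈ Sig, p E := by
    rw [hT, Ne, Finset.filter_eq_empty_iff]
    push_neg
    rfl
  by_cases hTe : T = ∅
  · rw [if_pos hTe, if_neg (by rw [← hTiff]; simp [hTe])]
    ring
  · rw [if_neg hTe, if_pos (hTiff.mp hTe)]
    ring

/-- The flats covered by some member of `Sig`. -/
noncomputable def covered (Sig : Finset (Set α)) : Finset (Finset α) :=
  Finset.univ.filter fun Y => G.IsClosed ↑Y ∧ ∃ E ∈ Sig, ↑Y ⊆ E

lemma sum_indicator_eq_card (S : Set α) (X : Finset α) (h : S = ↑X) :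
    ∑ x ∈ Finset.univ, (if x ∈ S then (1 : ℤ) else 0) = (X.card : ℤ) := by
  have step : (∑ x ∈ Finset.univ, if x ∈ S then (1 : ℤ) else 0)
      = ∑ x ∈ Finset.univ, if x ∈ X then (1 : ℤ) else 0 :=
    Finset.sum_congr rfl (fun x _ => if_congr (by rw [h, Finset.mem_coe]) rfl rfl)
  rw [step, Finset.sum_ite_mem, Finset.univ_inter, Finset.sum_const]
  simp

/-- KEY identity: `Δ(Σ) = |⋃Σ| − Σ_{Y covered} α(Y)`. -/
lemma flatSum_eq (Sig : Finset (Set α)) (hcl : ∀ E ∈ Sig, G.IsClosed E) :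
    G.flatSum Sig = (∑ x ∈ Finset.univ, if x ∈ (⋃₀ ↑Sig : Set α) then (1 : ℤ) else 0) -
      ∑ Y ∈ covered G Sig, G.alphaIn Set.univ Y := by
  classical
  unfold Pregeometry.flatSum
  have hterm : ∀ S ∈ Sig.powerset.filter (· ≠ ∅),
      (G.sdim (⋂₀ ↑S) : ℤ) = (∑ x ∈ Finset.univ, if x ∈ (⋂₀ ↑S : Set α) then (1 : ℤ) else 0) -
        ∑ Y ∈ flats G (⋂₀ ↑S), G.alphaIn Set.univ Y := by
    intro S hS
    simp only [Finset.mem_filter, Finset.mem_powerset] at hS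
    have hclS : G.IsClosed (⋂₀ ↑S) := by
      unfold Pregeometry.IsClosed
      apply subset_antisymm _ (subset_cl G _)
      intro x hx
      rw [Set.mem_sInter]
      intro E hE
      have hE' : E ∈ Sig := hS.1 hE
      have h1 : G.cl (⋂₀ ↑S) ⊆ G.cl E := cl_mono G (Set.sInter_subset_of_mem hE)
      have h2 : G.cl E = E := hcl E hE'
      exact h2 ▸ h1 hx
    have hd := dim_closed G (⋂₀ ↑S : Set α).toFinset
      (by rw [Set.coe_toFinset]; exact hclS)
    rw [sdim_eq, hd, Set.coe_toFinset,
      sum_indicator_eq_card (⋂₀ ↑S : Set α) (⋂₀ ↑S : Set α).toFinset (Set.coe_toFinset _).symm]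
  rw [Finset.sum_congr rfl (fun S hS => by rw [hterm S hS])]
  have hsplit : ∑ S ∈ Sig.powerset.filter (· ≠ ∅),
      (-1 : ℤ) ^ (S.card + 1) * ((∑ x ∈ Finset.univ, if x ∈ (⋂₀ ↑S : Set α) then (1 : ℤ) else 0) -
        ∑ Y ∈ flats G (⋂₀ ↑S), G.alphaIn Set.univ Y)
    = (∑ S ∈ Sig.powerset.filter (· ≠ ∅),
        (-1 : ℤ) ^ (S.card + 1) * (∑ x ∈ Finset.univ, if x ∈ (⋂₀ ↑S : Set α) then (1 : ℤ) else 0))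
      - ∑ S ∈ Sig.powerset.filter (· ≠ ∅),
        (-1 : ℤ) ^ (S.card + 1) * ∑ Y ∈ flats G (⋂₀ ↑S), G.alphaIn Set.univ Y := by
    rw [← Finset.sum_sub_distrib]
    apply Finset.sum_congr rfl
    intro S _
    ring
  rw [hsplit]
  congr 1
  · -- inclusion-exclusion for cardinality
    have hpt : ∀ S ∈ Sig.powerset.filter (· ≠ ∅),
        (∑ x ∈ Finset.univ, if x ∈ (⋂₀ ↑S : Set α) then (1 : ℤ) else 0)
          = ∑ x ∈ Finset.univ, (if ∀ E ∈ S, x ∈ E then (1 : ℤ) else 0) := by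
      intro S hS
      apply Finset.sum_congr rfl
      intro x _
      apply if_congr _ rfl rfl
      simp only [Set.mem_sInter, Finset.mem_coe]
    rw [Finset.sum_congr rfl (fun S hS => by rw [hpt S hS, Finset.mul_sum])]
    rw [Finset.sum_comm]
    have hx : ∀ x : α, ∑ S ∈ Sig.powerset.filter (· ≠ ∅),
        (-1 : ℤ) ^ (S.card + 1) * (if ∀ E ∈ S, x ∈ E then (1 : ℤ) else 0)
          = if ∃ E ∈ Sig, x ∈ E then (1 : ℤ) else 0 := fun x => coreIE Sig (x ∈ ·) 1
    rw [Finset.sum_congr rfl (fun x _ => hx x)]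
    apply Finset.sum_congr rfl
    intro x _
    apply if_congr _ rfl rfl
    simp only [Set.mem_sUnion, Finset.mem_coe]
  · -- the alpha part
    have hfl : ∀ S ∈ Sig.powerset.filter (· ≠ ∅),
        ∑ Y ∈ flats G (⋂₀ ↑S), G.alphaIn Set.univ Y
          = ∑ Y ∈ Finset.univ.filter (fun Y : Finset α => G.IsClosed ↑Y),
              (if ∀ E ∈ S, ↑Y ⊆ E then G.alphaIn Set.univ Y else 0) := by
      intro S hS
      rw [Finset.sum_filter]
      unfold flats
      rw [Finset.sum_filter]
      apply Finset.sum_congr rfl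
      intro Y _
      by_cases h1 : G.IsClosed (↑Y : Set α)
      · by_cases h2 : (↑Y : Set α) ⊆ ⋂₀ ↑S
        · rw [if_pos ⟨h1, h2⟩, if_pos h1, if_pos]
          intro E hE
          exact h2.trans (Set.sInter_subset_of_mem hE)
        · rw [if_neg (by tauto), if_pos h1, if_neg]
          intro hall
          exact h2 (Set.subset_sInter (fun E hE => hall E hE))
      · rw [if_neg (by tauto), if_neg h1]
    rw [Finset.sum_congr rfl (fun S hS => by rw [hfl S hS, Finset.mul_sum])]
    rw [Finset.sum_comm]
    have hY : ∀ Y : Finset α, ∑ S ∈ Sig.powerset.filter (· ≠ ∅),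
        (-1 : ℤ) ^ (S.card + 1) * (if ∀ E ∈ S, (↑Y : Set α) ⊆ E then G.alphaIn Set.univ Y else 0)
          = if ∃ E ∈ Sig, (↑Y : Set α) ⊆ E then G.alphaIn Set.univ Y else 0 :=
      fun Y => coreIE Sig ((↑Y : Set α) ⊆ ·) (G.alphaIn Set.univ Y)
    rw [Finset.sum_congr rfl (fun Y _ => hY Y)]
    unfold covered
    rw [← Finset.filter_filter, Finset.sum_filter, Finset.sum_filter, Finset.sum_filter]

end PG17

/-- a finite pregeometry is flat iff `α_G(X) ≥ 0` for every `X`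
that is a union of closed sets. -/
theorem flat_iff_alpha_nonneg {α : Type*} [DecidableEq α] [Fintype α]
    (G : Pregeometry α) :
    G.FlatIn Set.univ ↔
      ∀ X : Finset α,
        (∃ T : Finset (Finset α), (∀ Y ∈ T, G.IsClosed ↑Y) ∧ X = T.sup id) →
        0 ≤ G.alphaIn Set.univ X := by
  classical
  constructor
  · rintro hflat X ⟨T, hT, rfl⟩
    set X := T.sup id with hXdef
    by_cases hc : ∀ x ∈ X, ∃ Y : Finset α, G.IsClosed ↑Y ∧ Y ⊆ X ∧ Y ≠ X ∧ x ∈ Y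
    · -- Case 1: every point lies in a proper flat of X
      set Sig : Finset (Set α) := (PG17.pflats G X).image (fun Y : Finset α => (↑Y : Set α))
        with hSig
      have hcl : ∀ E ∈ Sig, G.IsClosed E := by
        intro E hE
        simp only [hSig, Finset.mem_image] at hE
        obtain ⟨Y, hY, rfl⟩ := hE
        simp only [PG17.pflats, Finset.mem_filter] at hY
        exact hY.2.1
      have hcl' : ∀ E ∈ Sig, G.IsClosedIn Set.univ E := fun E hE =>
        (PG17.isClosedIn_univ G E).mpr (hcl E hE)
      have h1 := hflat Sig hcl' (fun E _ => PG17.edim_ne_top G E)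
      have hU : (⋃₀ ↑Sig : Set α) = ↑X := by
        ext y
        simp only [Set.mem_sUnion, Finset.mem_coe, hSig, Finset.mem_image]
        constructor
        · rintro ⟨E, ⟨Y, hY, rfl⟩, hy⟩
          simp only [PG17.pflats, Finset.mem_filter, Finset.mem_univ, true_and] at hY
          exact hY.2.1 (by exact_mod_cast hy)
        · intro hy
          obtain ⟨Y, hY1, hY2, hY3, hY4⟩ := hc y (by exact_mod_cast hy)
          exact ⟨↑Y, ⟨Y, by simp [PG17.pflats, hY1, hY2, hY3], rfl⟩, by exact_mod_cast hY4⟩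
      rw [PG17.flatSum_eq G Sig hcl] at h1
      have hcov : PG17.covered G Sig = PG17.pflats G X := by
        ext Y
        simp only [PG17.covered, Finset.mem_filter, Finset.mem_univ, true_and, hSig,
          Finset.mem_image]
        constructor
        · rintro ⟨h1', E, ⟨Z, hZ, rfl⟩, h2'⟩
          simp only [PG17.pflats, Finset.mem_filter, Finset.mem_univ, true_and] at hZ
          have hYZ : Y ⊆ Z := by exact_mod_cast h2'
          simp only [PG17.pflats, Finset.mem_filter, Finset.mem_univ, true_and]
          refine ⟨h1', hYZ.trans hZ.2.1, ?_⟩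
          rintro rfl
          exact hZ.2.2 (Finset.Subset.antisymm hZ.2.1 hYZ)
        · intro h1'
          have h2' := h1'
          simp only [PG17.pflats, Finset.mem_filter, Finset.mem_univ, true_and] at h2'
          exact ⟨h2'.1, ↑Y, ⟨Y, h1', rfl⟩, subset_rfl⟩
      rw [hcov, hU] at h1
      rw [PG17.sdim_eq] at h1
      rw [PG17.sum_indicator_eq_card (↑X : Set α) X rfl] at h1
      rw [Finset.toFinset_coe] at h1
      rw [PG17.alpha_rec]
      linarith
    · -- Case 2: some point lies in no proper flat of X
      push_neg at hc
      obtain ⟨x, hxX, hx⟩ := hc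
      have hmax : ∀ Y : Finset α, G.IsClosed ↑Y → Y ⊆ X → x ∈ Y → Y = X := by
        intro Y h1 h2 h3
        by_contra h4
        exact hx Y h1 h2 h4 h3
      have hclX : G.cl {x} = (↑X : Set α) := by
        have hsub : G.cl {x} ⊆ ↑X := by
          obtain ⟨Y, hYT, hxY⟩ := Finset.mem_sup.mp hxX
          have h1 : G.cl {x} ⊆ G.cl ↑(id Y : Finset α) := PG17.cl_mono G (by simpa using hxY)
          have h2 : G.cl ↑(id Y : Finset α) = ↑(id Y : Finset α) := hT Y hYT
          rw [h2] at h1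
          exact h1.trans (by exact_mod_cast Finset.le_sup (f := id) hYT)
        set K := (G.cl {x}).toFinset with hK
        have hKcoe : (↑K : Set α) = G.cl {x} := Set.coe_toFinset _
        have hKX : K = X := by
          apply hmax K (by rw [hKcoe]; exact PG17.isClosed_cl G _)
          · intro y hy
            have hy1 : (y : α) ∈ G.cl {x} := by rw [← hKcoe]; exact_mod_cast hy
            exact_mod_cast hsub hy1
          · rw [← Finset.mem_coe, hKcoe]
            exact PG17.subset_cl G _ rfl
        rw [← hKX]
        exact hKcoe.symm
      set E := G.cl (∅ : Set α) with hE
      set Ef := E.toFinset with hEf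
      have hEcoe : (↑Ef : Set α) = E := Set.coe_toFinset _
      have hEcl : G.IsClosed E := PG17.isClosed_cl G _
      have hdimEf : G.dim Ef = 0 := by
        have h1 : (↑Ef : Set α) ⊆ G.cl ↑(∅ : Finset α) := by
          rw [hEcoe, Finset.coe_empty]
        have h2 := PG17.dim_union_cl G h1
        rwa [Finset.empty_union, G.dim_empty] at h2
      have hpfEf : PG17.pflats G Ef = ∅ := by
        rw [Finset.eq_empty_iff_forall_notMem]
        intro Y hY
        simp only [PG17.pflats, Finset.mem_filter, Finset.mem_univ, true_and] at hY
        obtain ⟨h1, h2, h3⟩ := hY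
        apply h3
        have h5 : G.cl ↑Y = ↑Y := h1
        have h4 : E ⊆ ↑Y := by
          rw [← h5]
          exact PG17.cl_mono G (Set.empty_subset _)
        apply Finset.coe_injective
        apply subset_antisymm
        · exact_mod_cast h2
        · rw [hEcoe]; exact h4
      have hαEf : G.alphaIn Set.univ Ef = (Ef.card : ℤ) := by
        rw [PG17.alpha_rec, hpfEf, Finset.sum_empty, hdimEf]
        push_cast
        ring
      by_cases hx0 : G.dim {x} = 0
      · have hxE : x ∈ E := ⟨∅, by simp, by simp [G.dim_empty, hx0]⟩
        have hXE : (↑X : Set α) = E := by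
          apply subset_antisymm
          · rw [← hclX]
            have h1 : ({x} : Set α) ⊆ E := by
              intro y hy
              rw [Set.mem_singleton_iff] at hy
              subst hy
              exact hxE
            have h2 := PG17.cl_mono G h1
            have h3 : G.cl E = E := hEcl
            rwa [h3] at h2
          · rw [← hclX]
            exact PG17.cl_mono G (Set.empty_subset _)
        have hXEf : X = Ef := Finset.coe_injective (by rw [hXE, hEcoe])
        rw [hXEf, hαEf]
        exact_mod_cast Nat.zero_le _
      · have hx1 : G.dim {x} = 1 := by
          have h1 := G.insert_le_dim ∅ x
          rw [show insert x (∅ : Finset α) = {x} from rfl, G.dim_empty] at h1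
          omega
        have hxnE : x ∉ E := by
          rintro ⟨A, hA, hd⟩
          have hA0 : A = ∅ := Finset.coe_eq_empty.mp (Set.subset_empty_iff.mp hA)
          subst hA0
          rw [G.dim_empty, show insert x (∅ : Finset α) = {x} from rfl] at hd
          exact hx0 hd
        have hEfX : Ef ⊆ X := by
          intro y hy
          have h1 : (y : α) ∈ E := by rw [← hEcoe]; exact_mod_cast hy
          have h2 : E ⊆ ↑X := by rw [← hclX]; exact PG17.cl_mono G (Set.empty_subset _)
          exact_mod_cast h2 h1
        have hEfne : Ef ≠ X := by
          intro h
          apply hxnE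
          rw [← hEcoe, h]
          exact_mod_cast hxX
        have hpf : PG17.pflats G X = {Ef} := by
          ext Y
          simp only [PG17.pflats, Finset.mem_filter, Finset.mem_univ, true_and,
            Finset.mem_singleton]
          constructor
          · rintro ⟨h1, h2, h3⟩
            have hYE : (↑Y : Set α) ⊆ E := by
              intro y hy
              by_contra hyE
              have hy1 : G.dim {y} = 1 := by
                have hle := G.insert_le_dim ∅ y
                rw [show insert y (∅ : Finset α) = {y} from rfl, G.dim_empty] at hle
                have hne : G.dim {y} ≠ 0 := by
                  intro h0
                  exact hyE ⟨∅, by simp, by simp [G.dim_empty, h0]⟩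
                omega
              have hyX : y ∈ G.cl {x} := by
                rw [hclX]
                exact_mod_cast h2 hy
              have hyX' : y ∈ G.cl ↑({x} : Finset α) := by rwa [Finset.coe_singleton]
              have hdxy := (PG17.mem_cl_finset G).mp hyX'
              have hpair : insert y ({x} : Finset α) = insert x ({y} : Finset α) := by
                ext z
                simp only [Finset.mem_insert, Finset.mem_singleton]
                tauto
              rw [hpair, hx1] at hdxy
              have hxcly : x ∈ G.cl ↑({y} : Finset α) :=
                (PG17.mem_cl_finset G).mpr (by rw [hdxy, hy1])
              have hxY : x ∈ Y := by
                have h5 : G.cl ↑({y} : Finset α) ⊆ G.cl ↑Y :=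
                  PG17.cl_mono G (by simpa using hy)
                have h6 : G.cl ↑Y = ↑Y := h1
                rw [h6] at h5
                exact_mod_cast h5 hxcly
              exact h3 (hmax Y h1 h2 hxY)
            have hEY : E ⊆ ↑Y := by
              have h5 : G.cl ↑Y = ↑Y := h1
              rw [← h5]
              exact PG17.cl_mono G (Set.empty_subset _)
            apply Finset.coe_injective
            rw [hEcoe]
            exact subset_antisymm hYE hEY
          · rintro rfl
            exact ⟨by rw [hEcoe]; exact hEcl, hEfX, hEfne⟩
        have hdX : G.dim X = 1 := by
          have h1 : (↑X : Set α) ⊆ G.cl ↑({x} : Finset α) := by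
            rw [Finset.coe_singleton, hclX]
          have h2 := PG17.dim_union_cl G h1
          rw [Finset.union_eq_right.mpr (Finset.singleton_subset_iff.mpr hxX)] at h2
          rw [h2, hx1]
        have hcard : Ef.card < X.card :=
          Finset.card_lt_card ⟨hEfX, fun h => hEfne (Finset.Subset.antisymm hEfX h)⟩
        rw [PG17.alpha_rec, hpf, Finset.sum_singleton, hαEf, hdX]
        push_cast
        omega
  · intro h Sig hcl _
    have hcl' : ∀ E ∈ Sig, G.IsClosed E := fun E hE => (PG17.isClosedIn_univ G E).mp (hcl E hE)
    rw [PG17.flatSum_eq G Sig hcl']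
    set U := (⋃₀ ↑Sig : Set α) with hU
    set Uf := U.toFinset with hUf
    have hUcoe : (↑Uf : Set α) = U := Set.coe_toFinset _
    rw [PG17.sdim_coe G U Uf hUcoe.symm]
    rw [PG17.sum_indicator_eq_card U Uf hUcoe.symm]
    set T : Finset (Finset α) := Sig.image (fun E : Set α => E.toFinset) with hTdef
    have hTcl : ∀ Y ∈ T, G.IsClosed ↑Y := by
      intro Y hY
      simp only [hTdef, Finset.mem_image] at hY
      obtain ⟨E, hE, rfl⟩ := hY
      rw [Set.coe_toFinset]
      exact hcl' E hE
    have hTsup : Uf = T.sup id := by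
      apply Finset.coe_injective
      rw [hUcoe]
      ext y
      simp only [Finset.mem_coe, Finset.mem_sup, hTdef, Finset.mem_image, id, hU,
        Set.mem_sUnion]
      constructor
      · rintro ⟨E, hE, hy⟩
        exact ⟨E.toFinset, ⟨E, by exact_mod_cast hE, rfl⟩, Set.mem_toFinset.mpr hy⟩
      · rintro ⟨Y, ⟨E, hE, rfl⟩, hy⟩
        exact ⟨E, by exact_mod_cast hE, Set.mem_toFinset.mp hy⟩
    have hS0 : Uf ∉ PG17.pflats G Uf := by simp [PG17.pflats]
    have hα := PG17.alpha_rec G Uf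
    have hsub : PG17.covered G Sig ⊆ insert Uf (PG17.pflats G Uf) := by
      intro Y hY
      simp only [PG17.covered, Finset.mem_filter, Finset.mem_univ, true_and] at hY
      obtain ⟨h1, E, hE, h2⟩ := hY
      rw [Finset.mem_insert]
      by_cases h3 : Y = Uf
      · exact Or.inl h3
      · refine Or.inr ?_
        simp only [PG17.pflats, Finset.mem_filter, Finset.mem_univ, true_and]
        refine ⟨h1, ?_, h3⟩
        rw [← Finset.coe_subset, hUcoe]
        exact h2.trans (Set.subset_sUnion_of_mem (by exact_mod_cast hE))
    have hsdiff := Finset.sum_sdiff (f := G.alphaIn Set.univ) hsub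
    have hnn : 0 ≤ ∑ Y ∈ (insert Uf (PG17.pflats G Uf)) \ PG17.covered G Sig,
        G.alphaIn Set.univ Y := by
      apply Finset.sum_nonneg
      intro Y hY
      rw [Finset.mem_sdiff, Finset.mem_insert] at hY
      rcases hY.1 with h1 | h1
      · rw [h1]
        exact h Uf ⟨T, hTcl, hTsup⟩
      · simp only [PG17.pflats, Finset.mem_filter, Finset.mem_univ, true_and] at h1
        exact h Y ⟨{Y}, by simpa using h1.1, by simp⟩
    have hins := Finset.sum_insert (f := G.alphaIn Set.univ) hS0
    linarith [hsdiff, hins, hα, hnn]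
end
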